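/- arXiv:1305.1074 — 7 statements merged into one kernel-verified Lean document; each statement's English description precedes it below -/
import Mathlib

section
/- Let k be an even integer and m a natural number with -m ≡ 0 or 1 mod 4. Write -m = D₀ f² where D₀ is the discriminant of ℚ(√-m) and f a positive integer. Define h_{k-1/2}(m) = h_{k-1/2}(|D₀|) · m^{k-3/2} · Σ_{d|f} μ(d) (D₀/d) d^{1-k} σ_{3-2k}(f/d), and g_k(m) = Σ_{d|f} μ(d) h_{k-1/2}(m/d²). Then g_k(m) = h_{k-1/2}(|D₀|) |D₀|^{k-3/2} · ∏_{q | f} ( q^{(2k-3)·ord_q(f)} − (D₀/q) q^{k-2+(2k-3)(ord_q(f)-1)} ), where the product is over primes q dividing f. -/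
open scoped BigOperators
open scoped BigOperators
open ArithmeticFunction

namespace Statement0Aux

noncomputable def zpowAF (s : ℤ) : ArithmeticFunction ℝ :=
  ⟨fun n => if n = 0 then 0 else (n : ℝ) ^ s, by simp⟩
lemma zpowAF_apply (s : ℤ) {n : ℕ} (hn : n ≠ 0) :
    zpowAF s n = (n : ℝ) ^ s := if_neg hn
lemma zpowAF_apply_zero (s : ℤ) : zpowAF s 0 = 0 := rfl
noncomputable def chiAF (χ : ℕ → ℝ) : ArithmeticFunction ℝ :=
  ⟨fun n => if n = 0 then 0 else χ n, by simp⟩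
lemma chiAF_apply (χ : ℕ → ℝ) {n : ℕ} (hn : n ≠ 0) : chiAF χ n = χ n := if_neg hn
noncomputable def muR : ArithmeticFunction ℝ := ((moebius : ArithmeticFunction ℤ) : ArithmeticFunction ℝ)
lemma muR_apply (n : ℕ) : muR n = ((moebius n : ℤ) : ℝ) := intCoe_apply

noncomputable def AA (k : ℤ) (χ : ℕ → ℝ) : ArithmeticFunction ℝ :=
  (muR.pmul (chiAF χ)).pmul (zpowAF (k - 2))

lemma AA_apply (k : ℤ) (χ : ℕ → ℝ) {n : ℕ} (hn : n ≠ 0) :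
    AA k χ n = ((moebius n : ℤ) : ℝ) * χ n * (n : ℝ) ^ (k - 2) := by
  rw [AA, pmul_apply, pmul_apply, muR_apply, chiAF_apply χ hn, zpowAF_apply _ hn]

lemma isMult_zpowAF (s : ℤ) : (zpowAF s).IsMultiplicative := by
  constructor
  · rw [zpowAF_apply s one_ne_zero]; simp
  · intro m n _
    rcases eq_or_ne m 0 with rfl | hm
    · simp [zpowAF_apply_zero]
    rcases eq_or_ne n 0 with rfl | hn
    · simp [zpowAF_apply_zero]
    rw [zpowAF_apply s (Nat.mul_ne_zero hm hn), zpowAF_apply s hm, zpowAF_apply s hn,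
      Nat.cast_mul, mul_zpow]

lemma isMult_AA (k : ℤ) (χ : ℕ → ℝ) (hχ1 : χ 1 = 1)
    (hχ : ∀ a b : ℕ, χ (a * b) = χ a * χ b) : (AA k χ).IsMultiplicative := by
  constructor
  · rw [AA_apply k χ one_ne_zero]; simp [hχ1]
  · intro m n hmn
    rcases eq_or_ne m 0 with rfl | hm
    · simp [AA]
    rcases eq_or_ne n 0 with rfl | hn
    · simp [AA]
    rw [AA_apply k χ (Nat.mul_ne_zero hm hn), AA_apply k χ hm, AA_apply k χ hn,
      isMultiplicative_moebius.map_mul_of_coprime hmn, hχ, Nat.cast_mul, mul_zpow]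
    push_cast
    ring

noncomputable def gg (k : ℤ) (χ : ℕ → ℝ) : ArithmeticFunction ℝ :=
  AA k χ * zpowAF (2 * k - 3)

lemma isMult_gg (k : ℤ) (χ : ℕ → ℝ) (hχ1 : χ 1 = 1)
    (hχ : ∀ a b : ℕ, χ (a * b) = χ a * χ b) : (gg k χ).IsMultiplicative :=
  (isMult_AA k χ hχ1 hχ).mul (isMult_zpowAF _)

lemma gg_prime_pow (k : ℤ) (χ : ℕ → ℝ) (hχ1 : χ 1 = 1)
    {q a : ℕ} (hq : q.Prime) (ha : 1 ≤ a) :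
    gg k χ (q ^ a) = (q : ℝ) ^ ((2 * k - 3) * (a : ℤ))
      - χ q * (q : ℝ) ^ (k - 2 + (2 * k - 3) * ((a : ℤ) - 1)) := by
  have hq0 : (q : ℝ) ≠ 0 := Nat.cast_ne_zero.mpr hq.pos.ne'
  rw [gg, mul_apply, Nat.sum_divisorsAntidiagonal (fun x y => AA k χ x * zpowAF (2*k-3) y),
    Nat.sum_divisors_prime_pow hq]
  have key : ∀ i ∈ Finset.range (a + 1),
      AA k χ (q ^ i) * zpowAF (2*k-3) (q ^ a / q ^ i)
        = if i = 0 then (q : ℝ) ^ ((2 * k - 3) * (a : ℤ))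
          else if i = 1 then -(χ q * (q : ℝ) ^ (k - 2 + (2 * k - 3) * ((a : ℤ) - 1)))
          else 0 := by
    intro i hi
    rw [Finset.mem_range] at hi
    have hile : i ≤ a := Nat.lt_succ_iff.mp hi
    have hdiv : q ^ a / q ^ i = q ^ (a - i) := Nat.pow_div hile hq.pos
    have hBz : zpowAF (2*k-3) (q ^ (a - i)) = (q : ℝ) ^ ((2*k-3) * ((a : ℤ) - i)) := by
      rw [zpowAF_apply _ (pow_ne_zero _ hq.pos.ne')]
      rw [Nat.cast_pow, ← zpow_natCast (q:ℝ) (a - i), ← zpow_mul]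
      congr 1
      rw [Nat.cast_sub hile]
      ring
    rcases Nat.eq_zero_or_pos i with rfl | hipos
    · rw [if_pos rfl, hdiv, hBz]
      have h1 : AA k χ 1 = 1 := by
        rw [AA_apply k χ one_ne_zero]
        simp [hχ1]
      rw [pow_zero, h1, one_mul]
      norm_num
    rcases eq_or_ne i 1 with rfl | hi1
    · rw [if_neg one_ne_zero, if_pos rfl, hdiv, hBz, pow_one,
        AA_apply k χ hq.pos.ne']
      rw [moebius_apply_prime hq]
      push_cast
      rw [zpow_add₀ hq0]
      ring
    · rw [if_neg hipos.ne', if_neg hi1,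
        AA_apply k χ (pow_ne_zero _ hq.pos.ne'),
        moebius_apply_prime_pow hq hipos.ne', if_neg hi1]
      simp
  rw [Finset.sum_congr rfl key,
    ← Finset.sum_subset (show ({0,1} : Finset ℕ) ⊆ Finset.range (a+1) by
        intro x hx
        rw [Finset.mem_range]
        rcases Finset.mem_insert.mp hx with rfl | hx
        · omega
        · rw [Finset.mem_singleton] at hx; omega)
      (fun x _ hx => by
        rw [Finset.mem_insert, Finset.mem_singleton] at hx
        push_neg at hx
        rw [if_neg hx.1, if_neg hx.2])]
  rw [Finset.sum_pair (by norm_num : (0:ℕ) ≠ 1)]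
  simp [sub_eq_add_neg]

noncomputable def zetaR : ArithmeticFunction ℝ := ((zeta : ArithmeticFunction ℕ) : ArithmeticFunction ℝ)

lemma zetaR_apply {n : ℕ} (hn : n ≠ 0) : zetaR n = 1 := by
  simp [zetaR, natCoe_apply, hn]

lemma muR_mul_zetaR : muR * zetaR = 1 := coe_moebius_mul_coe_zeta

lemma pmul_zpowAF_mul (s : ℤ) (F G : ArithmeticFunction ℝ) :
    (F * G).pmul (zpowAF s) = F.pmul (zpowAF s) * G.pmul (zpowAF s) := by
  ext n
  rcases eq_or_ne n 0 with rfl | hn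
  · simp
  rw [pmul_apply, mul_apply, mul_apply, Finset.sum_mul]
  refine Finset.sum_congr rfl fun x hx => ?_
  rw [Nat.mem_divisorsAntidiagonal] at hx
  have h1 : x.1 ≠ 0 := by rintro h; exact hn (by simp [← hx.1, h])
  have h2 : x.2 ≠ 0 := by rintro h; exact hn (by simp [← hx.1, h])
  rw [pmul_apply, pmul_apply, zpowAF_apply s hn, zpowAF_apply s h1, zpowAF_apply s h2,
    ← hx.1, Nat.cast_mul, mul_zpow]
  ring

lemma pmul_zpowAF_zpowAF (s t : ℤ) :
    (zpowAF s).pmul (zpowAF t) = zpowAF (s + t) := by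
  ext n
  rcases eq_or_ne n 0 with rfl | hn
  · simp [zpowAF_apply_zero]
  · rw [pmul_apply, zpowAF_apply s hn, zpowAF_apply t hn, zpowAF_apply _ hn,
      zpow_add₀ (by exact_mod_cast hn : (n:ℝ) ≠ 0)]

lemma zpowAF_zero : zpowAF 0 = zetaR := by
  ext n
  rcases eq_or_ne n 0 with rfl | hn
  · simp [zpowAF_apply_zero, zetaR]
  · rw [zpowAF_apply _ hn, zetaR_apply hn, zpow_zero]

lemma pmul_zetaR_zpowAF (s : ℤ) : zetaR.pmul (zpowAF s) = zpowAF s := by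
  ext n
  rcases eq_or_ne n 0 with rfl | hn
  · simp [zetaR]
  · rw [pmul_apply, zetaR_apply hn, one_mul]

noncomputable def CC (k : ℤ) (χ : ℕ → ℝ) : ArithmeticFunction ℝ :=
  (muR.pmul (chiAF χ)).pmul (zpowAF (1 - k))

noncomputable def FF (k : ℤ) (χ : ℕ → ℝ) : ArithmeticFunction ℝ :=
  (CC k χ * (zetaR * zpowAF (3 - 2*k))).pmul (zpowAF (2*k - 3))

lemma FF_apply (k : ℤ) (χ : ℕ → ℝ) {n : ℕ} (hn : n ≠ 0) :
    FF k χ n = (n : ℝ) ^ (2*k - 3) *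
      ∑ e ∈ n.divisors, ((moebius e : ℤ) : ℝ) * χ e * (e : ℝ) ^ ((1:ℤ) - k) *
        ∑ t ∈ (n / e).divisors, (t : ℝ) ^ ((3:ℤ) - 2 * k) := by
  rw [FF, pmul_apply, zpowAF_apply _ hn, mul_comm]
  congr 1
  rw [mul_apply, Nat.sum_divisorsAntidiagonal (fun x y => CC k χ x * (zetaR * zpowAF (3-2*k)) y)]
  refine Finset.sum_congr rfl fun e he => ?_
  have he0 : e ≠ 0 := (Nat.pos_of_mem_divisors he).ne'
  have h1 : CC k χ e = ((moebius e : ℤ) : ℝ) * χ e * (e : ℝ) ^ ((1:ℤ) - k) := by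
    rw [CC, pmul_apply, pmul_apply, muR_apply, chiAF_apply χ he0, zpowAF_apply _ he0]
  rw [h1, zetaR]
  rw [coe_zeta_mul_apply]
  congr 1
  refine Finset.sum_congr rfl fun t ht => ?_
  exact zpowAF_apply _ (Nat.pos_of_mem_divisors ht).ne'

lemma conv_eq (k : ℤ) (χ : ℕ → ℝ) : muR * FF k χ = gg k χ := by
  have h2 : (CC k χ).pmul (zpowAF (2*k - 3)) = AA k χ := by
    ext n
    rcases eq_or_ne n 0 with rfl | hn
    · simp [CC, AA]
    · rw [pmul_apply, CC, pmul_apply, pmul_apply, zpowAF_apply _ hn, zpowAF_apply _ hn,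
        AA, pmul_apply, pmul_apply, zpowAF_apply _ hn, mul_assoc,
        ← zpow_add₀ (by exact_mod_cast hn : (n:ℝ) ≠ 0)]
      rw [show (1:ℤ) - k + (2*k - 3) = k - 2 by ring]
  have h4 : (zpowAF (3 - 2*k)).pmul (zpowAF (2*k - 3)) = zetaR := by
    rw [pmul_zpowAF_zpowAF]
    rw [show (3 - 2*k) + (2*k - 3) = 0 by ring, zpowAF_zero]
  have h1 : FF k χ = AA k χ * (zpowAF (2*k - 3) * zetaR) := by
    rw [FF, pmul_zpowAF_mul, pmul_zpowAF_mul, h2, pmul_zetaR_zpowAF, h4]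
  rw [h1, gg]
  calc muR * (AA k χ * (zpowAF (2*k - 3) * zetaR))
      = (muR * zetaR) * (AA k χ * zpowAF (2*k - 3)) := by ring
    _ = AA k χ * zpowAF (2*k - 3) := by rw [muR_mul_zetaR, one_mul]

lemma core (k : ℤ) (χ : ℕ → ℝ) (hχ1 : χ 1 = 1)
    (hχ : ∀ a b : ℕ, χ (a * b) = χ a * χ b) (f : ℕ) (hf : f ≠ 0) :
    ∑ d ∈ f.divisors, ((moebius d : ℤ) : ℝ) *
        (((f / d : ℕ) : ℝ) ^ (2*k - 3) *
          ∑ e ∈ (f / d).divisors, ((moebius e : ℤ) : ℝ) * χ e * (e : ℝ) ^ ((1:ℤ) - k) *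
            ∑ t ∈ ((f / d) / e).divisors, (t : ℝ) ^ ((3:ℤ) - 2 * k))
      = ∏ q ∈ f.primeFactors,
          ((q : ℝ) ^ ((2 * k - 3) * (f.factorization q : ℤ))
            - χ q * (q : ℝ) ^ (k - 2 + (2 * k - 3) * ((f.factorization q : ℤ) - 1))) := by
  have step1 : ∑ d ∈ f.divisors, ((moebius d : ℤ) : ℝ) *
        (((f / d : ℕ) : ℝ) ^ (2*k - 3) *
          ∑ e ∈ (f / d).divisors, ((moebius e : ℤ) : ℝ) * χ e * (e : ℝ) ^ ((1:ℤ) - k) *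
            ∑ t ∈ ((f / d) / e).divisors, (t : ℝ) ^ ((3:ℤ) - 2 * k))
      = (muR * FF k χ) f := by
    rw [mul_apply, Nat.sum_divisorsAntidiagonal (fun x y => muR x * FF k χ y)]
    refine Finset.sum_congr rfl fun d hd => ?_
    have hd0 : f / d ≠ 0 :=
      (Nat.div_pos (Nat.le_of_dvd (Nat.pos_of_ne_zero hf) (Nat.dvd_of_mem_divisors hd))
        (Nat.pos_of_mem_divisors hd)).ne'
    rw [muR_apply, FF_apply k χ hd0]
  rw [step1, conv_eq]
  rw [ArithmeticFunction.IsMultiplicative.multiplicative_factorization _ (isMult_gg k χ hχ1 hχ) hf]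
  rw [Finsupp.prod]
  rw [Nat.support_factorization]
  refine Finset.prod_congr rfl fun q hq => ?_
  exact gg_prime_pow k χ hχ1 (Nat.prime_of_mem_primeFactors hq)
    ((Nat.Prime.factorization_pos_of_dvd (Nat.prime_of_mem_primeFactors hq) hf
      (Nat.dvd_of_mem_primeFactors hq)))

lemma cast_rpow (k : ℤ) (D e : ℕ) (he : e ≠ 0) :
    ((D * e ^ 2 : ℕ) : ℝ) ^ ((k : ℝ) - 3 / 2)
      = (D : ℝ) ^ ((k : ℝ) - 3 / 2) * (e : ℝ) ^ (2 * k - 3) := by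
  have he' : (0:ℝ) < (e : ℝ) := Nat.cast_pos.mpr (Nat.pos_of_ne_zero he)
  push_cast
  rw [Real.mul_rpow (by positivity) (by positivity)]
  congr 1
  rw [← Real.rpow_natCast (e:ℝ) 2, ← Real.rpow_mul he'.le]
  rw [show ((2:ℕ):ℝ) * ((k:ℝ) - 3/2) = ((2*k - 3 : ℤ) : ℝ) by push_cast; ring]
  rw [Real.rpow_intCast]

end Statement0Aux

/-- The multiplicative product formula for
`g_k(m) = Σ_{d|f} μ(d) h_{k-1/2}(m/d²)`, where `h_{k-1/2}` is given by Cohen's explicit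
formula with `-m = D₀ f²`, `D₀` the discriminant of `ℚ(√-m)`, `χ = (D₀/·)` the
(completely multiplicative) Kronecker symbol and `c = h_{k-1/2}(|D₀|)` a fixed constant. -/
theorem statement_0
    (k : ℤ) (hk : Even k)
    (m : ℕ) (hm : m ≠ 0)
    (hmod : (-(m : ℤ)) % 4 = 0 ∨ (-(m : ℤ)) % 4 = 1)
    (D₀ : ℤ) (f : ℕ) (hf : 0 < f)
    (hDf : -(m : ℤ) = D₀ * (f : ℤ) ^ 2)
    -- `χ` is the Kronecker symbol `(D₀/·)`, a completely multiplicative function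
    (χ : ℕ → ℝ) (hχ1 : χ 1 = 1) (hχ : ∀ a b : ℕ, χ (a * b) = χ a * χ b)
    -- `c` is the constant `h_{k-1/2}(|D₀|)`
    (c : ℝ)
    (h : ℕ → ℝ)
    -- `h e` is `h_{k-1/2}(|D₀| e²)`, given by Cohen's explicit formula
    (hh : ∀ e : ℕ, e ∣ f →
      h e = c * (((D₀.natAbs * e ^ 2 : ℕ) : ℝ) ^ ((k : ℝ) - 3 / 2)) *
        ∑ d ∈ e.divisors, (ArithmeticFunction.moebius d : ℝ) * χ d * (d : ℝ) ^ ((1 : ℤ) - k) *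
          ∑ t ∈ (e / d).divisors, (t : ℝ) ^ ((3 : ℤ) - 2 * k)) :
    ∑ d ∈ f.divisors, (ArithmeticFunction.moebius d : ℝ) * h (f / d)
      = c * ((D₀.natAbs : ℝ) ^ ((k : ℝ) - 3 / 2)) *
        ∏ q ∈ f.primeFactors,
          ((q : ℝ) ^ ((2 * k - 3) * (f.factorization q : ℤ))
            - χ q * (q : ℝ) ^ (k - 2 + (2 * k - 3) * ((f.factorization q : ℤ) - 1))) := by
  have hf0 : f ≠ 0 := hf.ne'
  have hsum : ∀ d ∈ f.divisors,
      (ArithmeticFunction.moebius d : ℝ) * h (f / d)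
        = c * ((D₀.natAbs : ℝ) ^ ((k : ℝ) - 3 / 2)) *
          ((ArithmeticFunction.moebius d : ℝ) *
            (((f / d : ℕ) : ℝ) ^ (2 * k - 3) *
              ∑ e ∈ (f / d).divisors,
                (ArithmeticFunction.moebius e : ℝ) * χ e * (e : ℝ) ^ ((1 : ℤ) - k) *
                  ∑ t ∈ ((f / d) / e).divisors, (t : ℝ) ^ ((3 : ℤ) - 2 * k))) := by
    intro d hd
    have hdvd : d ∣ f := Nat.dvd_of_mem_divisors hd
    have he0 : f / d ≠ 0 :=
      (Nat.div_pos (Nat.le_of_dvd hf hdvd) (Nat.pos_of_mem_divisors hd)).ne'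
    rw [hh (f / d) (Nat.div_dvd_of_dvd hdvd),
      Statement0Aux.cast_rpow k D₀.natAbs (f / d) he0]
    ring
  rw [Finset.sum_congr rfl hsum, ← Finset.mul_sum,
    Statement0Aux.core k χ hχ1 hχ f hf0]
end

section
/- Let k be an even integer and m a natural number with -m ≡ 0 or 1 mod 4, and write -m = D₀ f² with D₀ the discriminant of ℚ(√-m). With h_{k-1/2} and g_k defined as in the multiplicative formula g_k(m) = h_{k-1/2}(|D₀|)|D₀|^{k-3/2} ∏_{q|f}(q^{(2k-3)l_q} − (D₀/q) q^{k-2+(2k-3)(l_q-1)}) with l_q = ord_q(f), for any prime p one has g_k(p²m) = (p^{2k-3} − (-m/p) p^{k-2}) · g_k(m), where (-m/p) is the Legendre symbol for odd p, extended at p=2 by (a/2)=0,1,-1 according as a is even, a ≡ ±1 mod 8, or a ≡ ±3 mod 8. -/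
open scoped BigOperators

/-- `g_k(p²m) = (p^{2k-3} − (-m/p) p^{k-2}) g_k(m)`, where `g_k` is given
by the multiplicative formula `g_k(|D₀|e²) = c |D₀|^{k-3/2} ∏_{q|e}(q^{(2k-3)l_q} −
(D₀/q) q^{k-2+(2k-3)(l_q-1)})` with `l_q = ord_q(e)`, `-m = D₀ f²`, `χ = (D₀/·)` the
Kronecker symbol, and `ε = (-m/p)` the extended Legendre symbol, which is `0` when `p ∣ f`
and `(D₀/p)` otherwise. -/
theorem statement_1
    (k : ℤ) (hk : Even k)
    (m : ℕ) (hm : m ≠ 0)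
    (hmod : (-(m : ℤ)) % 4 = 0 ∨ (-(m : ℤ)) % 4 = 1)
    (D₀ : ℤ) (f : ℕ) (hf : 0 < f)
    (hDf : -(m : ℤ) = D₀ * (f : ℤ) ^ 2)
    (hmf : m = D₀.natAbs * f ^ 2)
    -- `χ` is the Kronecker symbol `(D₀/·)`, completely multiplicative
    (χ : ℕ → ℝ) (hχ1 : χ 1 = 1) (hχ : ∀ a b : ℕ, χ (a * b) = χ a * χ b)
    (c : ℝ)
    (p : ℕ) (hp : p.Prime)
    -- `ε` is the extended Legendre symbol `(-m/p)`
    (ε : ℝ) (hε0 : p ∣ f → ε = 0) (hε1 : ¬ p ∣ f → ε = χ p)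
    (g : ℕ → ℝ)
    -- `g (|D₀| e²)` is `g_k(|D₀| e²)`, given by the multiplicative product formula
    (hg : ∀ e : ℕ, 0 < e →
      g (D₀.natAbs * e ^ 2)
        = c * ((D₀.natAbs : ℝ) ^ ((k : ℝ) - 3 / 2)) *
          ∏ q ∈ e.primeFactors,
            ((q : ℝ) ^ ((2 * k - 3) * (e.factorization q : ℤ))
              - χ q * (q : ℝ) ^ (k - 2 + (2 * k - 3) * ((e.factorization q : ℤ) - 1)))) :
    g (p ^ 2 * m) = ((p : ℝ) ^ (2 * k - 3) - ε * (p : ℝ) ^ (k - 2)) * g m := by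
  have hp0 : p ≠ 0 := hp.ne_zero
  have hpR : (p : ℝ) ≠ 0 := by exact_mod_cast hp0
  have hf0 : f ≠ 0 := hf.ne'
  have hpf : 0 < p * f := Nat.mul_pos hp.pos hf
  have key : p ^ 2 * m = D₀.natAbs * (p * f) ^ 2 := by rw [hmf]; ring
  rw [key, hg (p * f) hpf, hmf, hg f hf]
  have hfac : ∀ q : ℕ, q ≠ p → (p * f).factorization q = f.factorization q := by
    intro q hq
    rw [Nat.factorization_mul hp0 hf0]
    simp [hp.factorization, Finsupp.single_apply, hq.symm]
  have hfacp : (p * f).factorization p = f.factorization p + 1 := by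
    rw [Nat.factorization_mul hp0 hf0]
    simp [hp.factorization]
    ring
  by_cases hd : p ∣ f
  · -- p divides f : ε = 0
    rw [hε0 hd]
    have hpmem : p ∈ f.primeFactors := Nat.mem_primeFactors.mpr ⟨hp, hd, hf0⟩
    have hset : (p * f).primeFactors = f.primeFactors := by
      rw [Nat.primeFactors_mul hp0 hf0, Nat.Prime.primeFactors hp]
      exact Finset.union_eq_right.mpr (Finset.singleton_subset_iff.mpr hpmem)
    have hpmem' : p ∈ (p * f).primeFactors := by rw [hset]; exact hpmem
    rw [← Finset.mul_prod_erase _ _ hpmem']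
    rw [← Finset.mul_prod_erase _ _ hpmem] at *
    have herase :
        ∏ q ∈ (p * f).primeFactors.erase p,
            ((q : ℝ) ^ ((2 * k - 3) * ((p * f).factorization q : ℤ))
              - χ q * (q : ℝ) ^ (k - 2 + (2 * k - 3) * (((p * f).factorization q : ℤ) - 1)))
          = ∏ q ∈ f.primeFactors.erase p,
            ((q : ℝ) ^ ((2 * k - 3) * (f.factorization q : ℤ))
              - χ q * (q : ℝ) ^ (k - 2 + (2 * k - 3) * ((f.factorization q : ℤ) - 1))) := by
      rw [hset]
      refine Finset.prod_congr rfl fun q hq => ?_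
      rw [hfac q (Finset.ne_of_mem_erase hq)]
    rw [herase]
    have hterm :
        ((p : ℝ) ^ ((2 * k - 3) * (((p * f).factorization p : ℤ)))
            - χ p * (p : ℝ) ^ (k - 2 + (2 * k - 3) * (((p * f).factorization p : ℤ) - 1)))
          = ((p : ℝ) ^ (2 * k - 3) - 0 * (p : ℝ) ^ (k - 2)) *
            ((p : ℝ) ^ ((2 * k - 3) * ((f.factorization p : ℤ)))
              - χ p * (p : ℝ) ^ (k - 2 + (2 * k - 3) * ((f.factorization p : ℤ) - 1))) := by
      rw [hfacp]
      push_cast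
      set l : ℤ := (f.factorization p : ℤ) with hl
      rw [show (2 * k - 3) * (l + 1) = (2 * k - 3) + (2 * k - 3) * l from by ring,
        show k - 2 + (2 * k - 3) * (l + 1 - 1)
            = (2 * k - 3) + (k - 2 + (2 * k - 3) * (l - 1)) from by ring,
        zpow_add₀ hpR, zpow_add₀ hpR]
      ring
    rw [hterm]
    ring
  · -- p does not divide f : new prime
    rw [hε1 hd]
    have hpnmem : p ∉ f.primeFactors := fun h => hd (Nat.dvd_of_mem_primeFactors h)
    have hset : (p * f).primeFactors = insert p f.primeFactors := by
      rw [Nat.primeFactors_mul hp0 hf0, Nat.Prime.primeFactors hp]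
      rfl
    rw [hset, Finset.prod_insert hpnmem]
    have hfp0 : f.factorization p = 0 := Nat.factorization_eq_zero_of_not_dvd hd
    have hterm :
        ((p : ℝ) ^ ((2 * k - 3) * (((p * f).factorization p : ℤ)))
            - χ p * (p : ℝ) ^ (k - 2 + (2 * k - 3) * (((p * f).factorization p : ℤ) - 1)))
          = ((p : ℝ) ^ (2 * k - 3) - χ p * (p : ℝ) ^ (k - 2)) := by
      rw [hfacp, hfp0]
      push_cast
      ring_nf
    have hrest :
        ∏ q ∈ f.primeFactors,
            ((q : ℝ) ^ ((2 * k - 3) * (((p * f).factorization q : ℤ)))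
              - χ q * (q : ℝ) ^ (k - 2 + (2 * k - 3) * (((p * f).factorization q : ℤ) - 1)))
          = ∏ q ∈ f.primeFactors,
            ((q : ℝ) ^ ((2 * k - 3) * ((f.factorization q : ℤ)))
              - χ q * (q : ℝ) ^ (k - 2 + (2 * k - 3) * ((f.factorization q : ℤ) - 1))) := by
      refine Finset.prod_congr rfl fun q hq => ?_
      rw [hfac q (fun h => hpnmem (h ▸ hq))]
    rw [hterm, hrest]
    ring
end

section
/- Let p be a prime, and let F be a function from 2×2 integer matrices to ℂ such that all sums below converge absolutely. Let L(p) = { [[1,0],[x,1]] : x mod p } ∪ { [[0,-1],[1,p]] }, a complete set of representatives of (δ GL₂(ℤ) δ⁻¹ ∩ GL₂(ℤ))\GL₂(ℤ) for δ = diag(p, p²)·(scalar normalization), and let L* = { λ ∈ ℤ^{2×2} : first column of λ lies in pℤ × ℤ } (i.e. entries λ₁₁ ∈ pℤ). Then Σ_{A ∈ L(p)} Σ_{λ ∈ L*} F(ᵗA λ) = Σ_{λ ∈ ℤ^{2×2}} F(λ) + p · Σ_{λ ∈ ℤ^{2×2}} F(λ · diag(p,1)). -/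
open Matrix

/-- The set `L(p) = { [[1,0],[x,1]] : x mod p } ∪ { [[0,-1],[1,p]] }`, a complete set of
representatives of `(δ GL₂(ℤ) δ⁻¹ ∩ GL₂(ℤ))\GL₂(ℤ)`, indexed by `Fin (p+1)`. -/
def Lp (p : ℕ) : Fin (p + 1) → Matrix (Fin 2) (Fin 2) ℤ :=
  fun i => if (i : ℕ) < p then !![1, 0; (i : ℤ), 1] else !![0, -1; 1, (p : ℤ)]

/-- The inverse of `(Lp p i)ᵀ`. -/
def Bp (p : ℕ) : Fin (p + 1) → Matrix (Fin 2) (Fin 2) ℤ :=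
  fun i => if (i : ℕ) < p then !![1, -(i : ℤ); 0, 1] else !![(p : ℤ), -1; 1, 0]

lemma transpose_two (a b c d : ℤ) : (!![a, b; c, d])ᵀ = !![a, c; b, d] := by
  ext i j; fin_cases i <;> fin_cases j <;> rfl

lemma Bp_mul (p : ℕ) (i : Fin (p+1)) : Bp p i * (Lp p i)ᵀ = 1 := by
  unfold Bp Lp
  split <;> rw [transpose_two, Matrix.mul_fin_two] <;>
    · norm_num; exact Matrix.one_fin_two.symm

lemma mul_Bp (p : ℕ) (i : Fin (p+1)) : (Lp p i)ᵀ * Bp p i = 1 := by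
  unfold Bp Lp
  split <;> rw [transpose_two, Matrix.mul_fin_two] <;>
    · norm_num; exact Matrix.one_fin_two.symm

lemma Bp_entry (p : ℕ) (i : Fin (p+1)) (μ : Matrix (Fin 2) (Fin 2) ℤ) :
    (Bp p i * μ) 0 0 = if (i : ℕ) < p then μ 0 0 - (i : ℤ) * μ 1 0
      else (p : ℤ) * μ 0 0 - μ 1 0 := by
  unfold Bp
  split <;> simp [Matrix.mul_apply, Fin.sum_univ_two] <;> ring

/-- Left multiplication by `(Lp p i)ᵀ` as an equivalence. -/
def ei (p : ℕ) (i : Fin (p + 1)) :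
    Matrix (Fin 2) (Fin 2) ℤ ≃ Matrix (Fin 2) (Fin 2) ℤ where
  toFun m := (Lp p i)ᵀ * m
  invFun m := Bp p i * m
  left_inv m := by simp only; rw [← mul_assoc, Bp_mul, one_mul]
  right_inv m := by simp only; rw [← mul_assoc, mul_Bp, one_mul]

def Sset (p : ℕ) (i : Fin (p + 1)) : Set (Matrix (Fin 2) (Fin 2) ℤ) :=
  {m | (p : ℤ) ∣ (Bp p i * m) 0 0}

def Tset (p : ℕ) : Set (Matrix (Fin 2) (Fin 2) ℤ) :=
  {m | (p : ℤ) ∣ m 0 0 ∧ (p : ℤ) ∣ m 1 0}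

def esub (p : ℕ) (i : Fin (p + 1)) :
    {l : Matrix (Fin 2) (Fin 2) ℤ // (p : ℤ) ∣ l 0 0} ≃ Sset p i :=
  (ei p i).subtypeEquiv (fun l => by
    simp only [Sset, Set.mem_setOf_eq, ei, Equiv.coe_fn_mk, ← mul_assoc, Bp_mul, one_mul])

/-- Right multiplication by `diag (p, 1)` as an equivalence onto `Tset p`. -/
def eT (p : ℕ) (hp0 : (p : ℤ) ≠ 0) : Matrix (Fin 2) (Fin 2) ℤ ≃ Tset p where
  toFun lam := ⟨lam * !![(p : ℤ), 0; 0, 1], by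
    constructor <;>
      · simp only [Set.mem_setOf_eq, Matrix.mul_apply, Fin.sum_univ_two]
        simp [dvd_mul_left]⟩
  invFun m := !![m.1 0 0 / p, m.1 0 1; m.1 1 0 / p, m.1 1 1]
  left_inv lam := by
    ext i j
    fin_cases i <;> fin_cases j <;>
      simp [Matrix.mul_apply, Fin.sum_univ_two, Int.mul_ediv_cancel _ hp0]
  right_inv m := by
    ext i j
    have h1 := m.2.1
    have h2 := m.2.2
    fin_cases i <;> fin_cases j <;>
      simp [Matrix.mul_apply, Fin.sum_univ_two, Int.ediv_mul_cancel h1,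
        Int.ediv_mul_cancel h2]

lemma count_aux {p : ℕ} (hp : p.Prime) (a b : ℤ) (x : ℂ) :
    ∑ i : Fin (p + 1),
      (if (p : ℤ) ∣ (if (i : ℕ) < p then a - (i : ℤ) * b else (p : ℤ) * a - b) then x else 0)
      = x + (p : ℂ) * (if (p : ℤ) ∣ a ∧ (p : ℤ) ∣ b then x else 0) := by
  classical
  haveI := Fact.mk hp
  rw [Fin.sum_univ_castSucc]
  have hlast : ¬ ((Fin.last p : ℕ) < p) := by simp
  simp only [Fin.coe_castSucc, Fin.val_last, hlast, if_false]
  simp only [Fin.is_lt, if_true]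
  have hdvd : (p : ℤ) ∣ (p : ℤ) * a - b ↔ (p : ℤ) ∣ b := dvd_sub_right ⟨a, rfl⟩
  by_cases hpb : (p : ℤ) ∣ b
  · by_cases hpa : (p : ℤ) ∣ a
    · have h1 : ∀ i : Fin p, (p : ℤ) ∣ a - (i : ℤ) * b := fun i => hpa.sub (hpb.mul_left _)
      simp [h1, hdvd, hpb, hpa, Finset.sum_const, Finset.card_univ]
      ring
    · have h1 : ∀ i : Fin p, ¬ (p : ℤ) ∣ a - (i : ℤ) * b := by
        intro i h
        exact hpa (by simpa using h.add (hpb.mul_left (i : ℤ)))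
      simp [h1, hdvd, hpb, hpa]
  · have hbz : ((b : ZMod p)) ≠ 0 := by
      rwa [Ne, ZMod.intCast_zmod_eq_zero_iff_dvd]
    set c : ZMod p := (a : ZMod p) / (b : ZMod p) with hc
    have hcond : ∀ i : Fin p, ((p : ℤ) ∣ a - (i : ℤ) * b) ↔ i = ⟨c.val, c.val_lt⟩ := by
      intro i
      rw [← ZMod.intCast_zmod_eq_zero_iff_dvd]
      push_cast
      rw [sub_eq_zero, eq_comm, ← eq_div_iff hbz, ← hc]
      constructor
      · intro h
        apply Fin.ext
        have := ZMod.val_cast_of_lt i.isLt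
        rw [h] at this
        exact this.symm
      · rintro rfl
        exact (ZMod.natCast_rightInverse c).symm ▸ rfl
    simp only [hcond]
    rw [Finset.sum_ite_eq' Finset.univ]
    simp [hdvd, hpb]

/-- `Σ_{A ∈ L(p)} Σ_{λ ∈ L*} F(ᵗA λ) = Σ_λ F(λ) + p Σ_λ F(λ · diag(p,1))`,
where `L* = { λ ∈ ℤ^{2×2} : λ₁₁ ∈ pℤ }` and all sums converge absolutely. -/
theorem statement_2 (p : ℕ) (hp : p.Prime)
    (F : Matrix (Fin 2) (Fin 2) ℤ → ℂ)
    (hF : Summable F)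
    (hF1 : ∀ i : Fin (p + 1),
      Summable (fun lam : {l : Matrix (Fin 2) (Fin 2) ℤ // (p : ℤ) ∣ l 0 0} =>
        F ((Lp p i)ᵀ * lam.1)))
    (hF2 : Summable (fun lam : Matrix (Fin 2) (Fin 2) ℤ => F (lam * !![(p : ℤ), 0; 0, 1]))) :
    ∑ i : Fin (p + 1), ∑' lam : {l : Matrix (Fin 2) (Fin 2) ℤ // (p : ℤ) ∣ l 0 0},
        F ((Lp p i)ᵀ * lam.1)
      = (∑' lam : Matrix (Fin 2) (Fin 2) ℤ, F lam)
        + (p : ℂ) * ∑' lam : Matrix (Fin 2) (Fin 2) ℤ, F (lam * !![(p : ℤ), 0; 0, 1]) := by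
  classical
  have hp0 : (p : ℤ) ≠ 0 := by exact_mod_cast hp.ne_zero
  -- summability of the indicators
  have hSsum : ∀ i : Fin (p + 1), Summable ((Sset p i).indicator F) := by
    intro i
    have h2 : Summable (fun m : Sset p i => F m.1) :=
      (Equiv.summable_iff (esub p i) (f := fun m : Sset p i => F m.1)).mp (hF1 i)
    exact summable_subtype_iff_indicator.mp h2
  have hTsum : Summable ((Tset p).indicator F) := by
    have h2 : Summable (fun m : Tset p => F m.1) :=
      (Equiv.summable_iff (eT p hp0) (f := fun m : Tset p => F m.1)).mp hF2
    exact summable_subtype_iff_indicator.mp h2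
  -- step 1 : rewrite each inner tsum as a tsum over all matrices of an indicator
  have step1 : ∀ i : Fin (p + 1),
      (∑' lam : {l : Matrix (Fin 2) (Fin 2) ℤ // (p : ℤ) ∣ l 0 0}, F ((Lp p i)ᵀ * lam.1))
        = ∑' μ : Matrix (Fin 2) (Fin 2) ℤ, (Sset p i).indicator F μ := by
    intro i
    rw [← tsum_subtype]
    exact ((esub p i).tsum_eq (fun m : Sset p i => F m.1))
  -- key pointwise counting identity
  have key : ∀ μ : Matrix (Fin 2) (Fin 2) ℤ,
      ∑ i : Fin (p + 1), (Sset p i).indicator F μ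
        = F μ + (p : ℂ) * (Tset p).indicator F μ := by
    intro μ
    have h := count_aux hp (μ 0 0) (μ 1 0) (F μ)
    simp only [Set.indicator_apply, Sset, Tset, Set.mem_setOf_eq, Bp_entry]
    exact h
  -- the T part
  have hTeq : (∑' μ : Matrix (Fin 2) (Fin 2) ℤ, (Tset p).indicator F μ)
      = ∑' lam : Matrix (Fin 2) (Fin 2) ℤ, F (lam * !![(p : ℤ), 0; 0, 1]) := by
    rw [← tsum_subtype]
    exact ((eT p hp0).tsum_eq (fun m : Tset p => F m.1)).symm
  calc
    ∑ i : Fin (p + 1), ∑' lam : {l : Matrix (Fin 2) (Fin 2) ℤ // (p : ℤ) ∣ l 0 0},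
        F ((Lp p i)ᵀ * lam.1)
        = ∑ i : Fin (p + 1), ∑' μ : Matrix (Fin 2) (Fin 2) ℤ, (Sset p i).indicator F μ :=
      Finset.sum_congr rfl (fun i _ => step1 i)
    _ = ∑' μ : Matrix (Fin 2) (Fin 2) ℤ, ∑ i : Fin (p + 1), (Sset p i).indicator F μ :=
      (Summable.tsum_finsetSum (fun i _ => hSsum i)).symm
    _ = ∑' μ : Matrix (Fin 2) (Fin 2) ℤ, (F μ + (p : ℂ) * (Tset p).indicator F μ) :=
      tsum_congr key
    _ = (∑' μ : Matrix (Fin 2) (Fin 2) ℤ, F μ)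
        + (p : ℂ) * ∑' μ : Matrix (Fin 2) (Fin 2) ℤ, (Tset p).indicator F μ := by
      rw [Summable.tsum_add hF (hTsum.mul_left _), tsum_mul_left]
    _ = _ := by rw [hTeq]
end

section
/- Let p be a prime and (a,b) ∈ ℤ². Among the p² + p matrices A in L(p²) = { [[1,0],[x,1]] : 0 ≤ x < p² } ∪ { [[0,-1],[1,py]] : 0 ≤ y < p }, the number of A such that the first coordinate of ᵗA⁻¹·(a,b) is divisible by p² equals p²+p if p² | a and p² | b, equals 1 if p ∤ a or p ∤ b, and equals p otherwise. -/
open Matrix Finset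

lemma filter_range_add (n m : ℕ) (P : ℕ → Prop) [DecidablePred P] :
    ((Finset.range (n + m)).filter P).card
      = ((Finset.range n).filter P).card
        + ((Finset.range m).filter (fun j => P (n + j))).card := by
  rw [Finset.range_add, Finset.filter_union, Finset.card_union_of_disjoint, Finset.filter_map,
    Finset.card_map]
  · rfl
  · rw [Finset.disjoint_left]
    intro x hx hx2
    simp only [Finset.mem_filter, Finset.mem_range] at hx
    simp only [Finset.mem_filter, Finset.mem_map, Finset.mem_range] at hx2
    obtain ⟨⟨j, hj, hje⟩, -⟩ := hx2
    simp [addLeftEmbedding] at hje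
    omega

lemma count_range_zmod (m : ℕ) [NeZero m] (Q : ZMod m → Prop) [DecidablePred Q] :
    ((Finset.range m).filter (fun i => Q ((i : ℕ) : ZMod m))).card
      = (Finset.univ.filter Q).card := by
  apply Finset.card_bij (fun i _ => ((i : ℕ) : ZMod m))
  · intro a ha
    simp only [Finset.mem_filter, Finset.mem_range] at ha ⊢
    exact ⟨Finset.mem_univ _, ha.2⟩
  · intro a ha b hb h
    simp only [Finset.mem_filter, Finset.mem_range] at ha hb
    have := congrArg ZMod.val h
    rwa [ZMod.val_cast_of_lt ha.1, ZMod.val_cast_of_lt hb.1] at this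
  · intro b hb
    simp only [Finset.mem_filter] at hb
    refine ⟨b.val, ?_, ZMod.natCast_rightInverse b⟩
    simp only [Finset.mem_filter, Finset.mem_range]
    exact ⟨ZMod.val_lt b, by rw [ZMod.natCast_rightInverse b]; exact hb.2⟩

lemma count_range_zmod_mul (m k : ℕ) [NeZero m] (Q : ZMod m → Prop) [DecidablePred Q] :
    ((Finset.range (m * k)).filter (fun i => Q ((i : ℕ) : ZMod m))).card
      = k * (Finset.univ.filter Q).card := by
  induction k with
  | zero => simp
  | succ k ih =>
    rw [Nat.mul_succ, filter_range_add, ih]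
    have h2 : ∀ j : ℕ, ((m * k + j : ℕ) : ZMod m) = ((j : ℕ) : ZMod m) := by
      intro j; push_cast; simp [ZMod.natCast_self]
    have : ((Finset.range m).filter (fun j => Q ((m * k + j : ℕ) : ZMod m))).card
        = (Finset.univ.filter Q).card := by
      rw [← count_range_zmod m Q]
      apply Finset.card_nbij id
      all_goals simp_all [Set.InjOn, Set.SurjOn, Set.MapsTo, Set.subset_def]
    rw [this]; ring

lemma count_unit {R : Type*} [CommRing R] [Fintype R] [DecidableEq R] (u c : R)
    (hu : IsUnit u) : (Finset.univ.filter (fun x => x * u = c)).card = 1 := by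
  obtain ⟨u, rfl⟩ := hu
  have : (Finset.univ.filter (fun x => x * (u : R) = c)) = {c * ↑u⁻¹} := by
    ext x
    simp [Units.eq_mul_inv_iff_mul_eq]
  rw [this, Finset.card_singleton]

lemma isUnit_int_cast {n : ℕ} (b : ℤ) (h : IsCoprime b ((n : ℕ) : ℤ)) :
    IsUnit ((b : ℤ) : ZMod n) := by
  obtain ⟨u, v, huv⟩ := h
  apply IsUnit.of_mul_eq_one ((u : ℤ) : ZMod n)
  have := congrArg (Int.cast : ℤ → ZMod n) huv
  push_cast at this
  rw [ZMod.natCast_self] at this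
  rw [mul_comm]
  simpa using this

/-- `L(p²) = { [[1,0],[x,1]] : 0 ≤ x < p² } ∪ { [[0,-1],[1,py]] : 0 ≤ y < p }`,
indexed by `Fin (p² + p)`. -/
def Lp2 (p : ℕ) : Fin (p ^ 2 + p) → Matrix (Fin 2) (Fin 2) ℤ :=
  fun i => if (i : ℕ) < p ^ 2 then !![1, 0; (i : ℤ), 1]
    else !![0, -1; 1, (p : ℤ) * ((i : ℤ) - (p : ℤ) ^ 2)]

/-- Among the `p²+p` matrices `A ∈ L(p²)`, the number of `A` such that
the first coordinate of `ᵗA⁻¹·(a,b)` is divisible by `p²` equals `p²+p` if `p² ∣ a` and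
`p² ∣ b`, equals `1` if `p ∤ a` or `p ∤ b`, and equals `p` otherwise. -/
theorem statement_5 (p : ℕ) (hp : p.Prime) (a b : ℤ) :
    (Finset.univ.filter fun i : Fin (p ^ 2 + p) =>
        (p : ℤ) ^ 2 ∣ (((Lp2 p i)⁻¹)ᵀ.mulVec ![a, b]) 0).card
      = if (p : ℤ) ^ 2 ∣ a ∧ (p : ℤ) ^ 2 ∣ b then p ^ 2 + p
        else if ¬ (p : ℤ) ∣ a ∨ ¬ (p : ℤ) ∣ b then 1
        else p := by
  classical
  have hp0 : 0 < p := hp.pos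
  have hpz : (p : ℤ) ≠ 0 := by exact_mod_cast hp0.ne'
  have hpI : Prime (p : ℤ) := Nat.prime_iff_prime_int.mp hp
  -- the scalar quantity
  set D : ℕ → ℤ := fun j => if j < p ^ 2 then a - (j : ℤ) * b
      else (p : ℤ) * ((j : ℤ) - (p : ℤ) ^ 2) * a - b with hD
  have key : ∀ i : Fin (p ^ 2 + p),
      (((Lp2 p i)⁻¹)ᵀ.mulVec ![a, b]) 0 = D (i : ℕ) := by
    intro i
    simp only [Lp2, hD]
    by_cases h : (i : ℕ) < p ^ 2
    · rw [if_pos h, if_pos h]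
      simp [Matrix.inv_def, Matrix.adjugate_fin_two, Matrix.det_fin_two, Matrix.mulVec,
        dotProduct]
      ring
    · rw [if_neg h, if_neg h]
      simp [Matrix.inv_def, Matrix.adjugate_fin_two, Matrix.det_fin_two, Matrix.mulVec,
        dotProduct]
      ring
  have hred : (Finset.univ.filter fun i : Fin (p ^ 2 + p) =>
        (p : ℤ) ^ 2 ∣ (((Lp2 p i)⁻¹)ᵀ.mulVec ![a, b]) 0).card
      = ((Finset.range (p ^ 2 + p)).filter fun j => (p : ℤ) ^ 2 ∣ D j).card := by
    rw [Finset.card_filter, Finset.card_filter]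
    rw [← Fin.sum_univ_eq_sum_range (fun j => if (p : ℤ) ^ 2 ∣ D j then 1 else 0)]
    apply Finset.sum_congr rfl
    intro i _
    rw [key i]
  rw [hred, filter_range_add]
  have hS1 : ((Finset.range (p ^ 2)).filter fun j => (p : ℤ) ^ 2 ∣ D j)
      = ((Finset.range (p ^ 2)).filter fun j : ℕ => (p : ℤ) ^ 2 ∣ a - (j : ℤ) * b) := by
    apply Finset.filter_congr
    intro x hx
    rw [Finset.mem_range] at hx
    rw [hD]; simp [hx]
  have hS2 : ((Finset.range p).filter fun j => (p : ℤ) ^ 2 ∣ D (p ^ 2 + j))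
      = ((Finset.range p).filter fun j : ℕ => (p : ℤ) ^ 2 ∣ (p : ℤ) * (j : ℤ) * a - b) := by
    apply Finset.filter_congr
    intro x hx
    have h1 : ¬ (p ^ 2 + x < p ^ 2) := by omega
    simp only [hD, if_neg h1]
    have : (p : ℤ) * (((p ^ 2 + x : ℕ) : ℤ) - (p : ℤ) ^ 2) * a - b
        = (p : ℤ) * (x : ℤ) * a - b := by push_cast; ring
    rw [this]
  rw [hS1, hS2]
  have hp2 : ((p : ℤ) ^ 2) = (((p ^ 2 : ℕ) : ℤ)) := by push_cast; ring
  have hpp2 : (p : ℤ) ∣ (p : ℤ) ^ 2 := dvd_pow_self _ two_ne_zero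
  haveI : NeZero p := ⟨hp0.ne'⟩
  haveI : NeZero (p ^ 2) := ⟨pow_ne_zero 2 hp0.ne'⟩
  by_cases hA : (p : ℤ) ^ 2 ∣ a ∧ (p : ℤ) ^ 2 ∣ b
  · rw [if_pos hA]
    obtain ⟨ha, hb⟩ := hA
    rw [Finset.filter_true_of_mem, Finset.filter_true_of_mem, Finset.card_range,
      Finset.card_range]
    · intro j _
      exact dvd_sub (Dvd.dvd.mul_left ha _) hb
    · intro j _
      exact dvd_sub ha (Dvd.dvd.mul_left hb _)
  · rw [if_neg hA]
    by_cases hb : (p : ℤ) ∣ b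
    · by_cases ha : (p : ℤ) ∣ a
      · -- branch "p"
        rw [if_neg (by push_neg; exact ⟨ha, hb⟩)]
        obtain ⟨a', rfl⟩ := ha
        obtain ⟨b', rfl⟩ := hb
        by_cases hb' : (p : ℤ) ∣ b'
        · -- S1 empty, S2 full
          have ha' : ¬ (p : ℤ) ∣ a' := by
            intro h
            exact hA ⟨by rw [sq]; exact mul_dvd_mul_left _ h,
              by rw [sq]; exact mul_dvd_mul_left _ hb'⟩
          rw [Finset.filter_false_of_mem, Finset.filter_true_of_mem, Finset.card_empty,
            Finset.card_range, Nat.zero_add]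
          · intro j _
            have h1 : ((p : ℤ)) * (j : ℤ) * ((p : ℤ) * a') - (p : ℤ) * b'
                = (p : ℤ) * ((p : ℤ) * ((j : ℤ) * a') - b') := by ring
            rw [h1, sq]
            exact mul_dvd_mul_left _ (dvd_sub (Dvd.intro _ rfl) hb')
          · intro j _ hcon
            apply ha'
            have h3 : (p : ℤ) * a' - (j : ℤ) * ((p : ℤ) * b')
                = (p : ℤ) * (a' - (j : ℤ) * b') := by ring
            rw [h3, sq, mul_dvd_mul_iff_left hpz] at hcon
            have := dvd_add hcon (Dvd.dvd.mul_left hb' (j : ℤ))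
            simpa using this
        · -- S1 has p elements, S2 empty
          have hiff : ∀ j : ℕ, ((p : ℤ) ^ 2 ∣ (p : ℤ) * a' - (j : ℤ) * ((p : ℤ) * b')
              ↔ ((j : ℕ) : ZMod p) * ((b' : ℤ) : ZMod p) = ((a' : ℤ) : ZMod p)) := by
            intro j
            have h1 : (p : ℤ) * a' - (j : ℤ) * ((p : ℤ) * b')
                = (p : ℤ) * (a' - (j : ℤ) * b') := by ring
            rw [h1, sq, mul_dvd_mul_iff_left hpz,
              show ((p : ℤ)) = ((p : ℕ) : ℤ) from rfl,
              ← ZMod.intCast_zmod_eq_zero_iff_dvd]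
            push_cast
            rw [sub_eq_zero, eq_comm]
          have h2 : ((Finset.range (p ^ 2)).filter
                fun j : ℕ => (p : ℤ) ^ 2 ∣ (p : ℤ) * a' - (j : ℤ) * ((p : ℤ) * b'))
              = ((Finset.range (p * p)).filter
                fun j : ℕ => ((j : ℕ) : ZMod p) * ((b' : ℤ) : ZMod p) = ((a' : ℤ) : ZMod p)) := by
            rw [← sq]
            exact Finset.filter_congr (fun x _ => hiff x)
          rw [h2, count_range_zmod_mul p p (fun x => x * ((b' : ℤ) : ZMod p) = ((a' : ℤ) : ZMod p)),
            count_unit _ _ (isUnit_int_cast b' ((Nat.prime_iff_prime_int.mp hp).coprime_iff_not_dvd.mpr hb').symm)]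
          rw [Finset.filter_false_of_mem, Finset.card_empty, Nat.add_zero, Nat.mul_one]
          intro j _ hcon
          apply hb'
          have h3 : ((p : ℤ)) * (j : ℤ) * ((p : ℤ) * a') - (p : ℤ) * b'
              = (p : ℤ) * ((p : ℤ) * ((j : ℤ) * a') - b') := by ring
          rw [h3, sq, mul_dvd_mul_iff_left hpz] at hcon
          have := dvd_sub (Dvd.intro ((j : ℤ) * a') rfl) hcon
          simpa using this
      · -- ¬ p ∣ a, p ∣ b : branch "1", S1 empty, S2 card 1
        rw [if_pos (Or.inl ha)]
        obtain ⟨b', rfl⟩ := hb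
        rw [Finset.filter_false_of_mem, Finset.card_empty, Nat.zero_add]
        · have hiff : ∀ j : ℕ, ((p : ℤ) ^ 2 ∣ (p : ℤ) * (j : ℤ) * a - (p : ℤ) * b'
              ↔ ((j : ℕ) : ZMod p) * ((a : ℤ) : ZMod p) = ((b' : ℤ) : ZMod p)) := by
            intro j
            have h1 : (p : ℤ) * (j : ℤ) * a - (p : ℤ) * b'
                = (p : ℤ) * ((j : ℤ) * a - b') := by ring
            rw [h1, sq, mul_dvd_mul_iff_left hpz,
              show ((p : ℤ)) = ((p : ℕ) : ℤ) from rfl,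
              ← ZMod.intCast_zmod_eq_zero_iff_dvd]
            push_cast
            rw [sub_eq_zero, eq_comm]
          rw [Finset.filter_congr (fun x _ => hiff x),
            count_range_zmod p (fun x => x * ((a : ℤ) : ZMod p) = ((b' : ℤ) : ZMod p)),
            count_unit _ _ (isUnit_int_cast a ((Nat.prime_iff_prime_int.mp hp).coprime_iff_not_dvd.mpr ha).symm)]
        · intro j _ hcon
          apply ha
          have h2 := dvd_trans hpp2 hcon
          have := dvd_add h2 (Dvd.dvd.mul_left (Dvd.intro b' rfl) (j : ℤ))
          simpa using this
    · -- ¬ p ∣ b : branch "1", S1 card 1, S2 empty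
      rw [if_pos (Or.inr hb)]
      have hiff : ∀ j : ℕ, ((p : ℤ) ^ 2 ∣ a - (j : ℤ) * b
          ↔ ((j : ℕ) : ZMod (p ^ 2)) * ((b : ℤ) : ZMod (p ^ 2)) = ((a : ℤ) : ZMod (p ^ 2))) := by
        intro j
        rw [hp2, ← ZMod.intCast_zmod_eq_zero_iff_dvd]
        push_cast
        rw [sub_eq_zero, eq_comm]
      have hu : IsUnit ((b : ℤ) : ZMod (p ^ 2)) := by
        apply isUnit_int_cast
        have h1 : IsCoprime b ((p : ℤ)) :=
          ((Nat.prime_iff_prime_int.mp hp).coprime_iff_not_dvd.mpr hb).symm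
        have h2 := h1.pow_right (n := 2)
        rwa [hp2] at h2
      rw [Finset.filter_congr (fun x _ => hiff x),
        count_range_zmod (p ^ 2) (fun x => x * ((b : ℤ) : ZMod (p ^ 2)) = ((a : ℤ) : ZMod (p ^ 2))),
        count_unit _ _ hu]
      rw [Finset.filter_false_of_mem, Finset.card_empty, Nat.add_zero]
      intro j _ hcon
      apply hb
      have h2 := dvd_trans hpp2 hcon
      have := dvd_sub (Dvd.dvd.mul_left (Dvd.intro ((j:ℤ)) rfl) a) h2
      simp only [mul_comm] at this ⊢
      have h3 : (p:ℤ) ∣ (p : ℤ) * (j : ℤ) * a - ((p : ℤ) * (j : ℤ) * a - b) :=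
        dvd_sub (Dvd.dvd.mul_right (Dvd.intro (j:ℤ) rfl) a) h2
      simpa using h3
end

section
/- Let p be an odd prime, M = [[l, r/2],[r/2, 1]] a positive definite half-integral 2×2 symmetric matrix with l, r ∈ ℤ, and set m = det(2M) = 4l − r². For a row vector λ = (λ₁, λ₂) ∈ ℤ^{1×2}, define G(λ) = Σ_{x ∈ (ℤ/pℤ)^×} e((λ M ᵗλ) x / p). Then Σ_{u ∈ ℤ/pℤ} G(λ + (0,u)) equals 0 if p | λ₁, and equals p · ((−m)/p) (Legendre symbol) if p ∤ λ₁. -/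
open Matrix

open Finset in
private lemma aux_shift {p : ℕ} [Fact p.Prime] {b : ZMod p} (hb : b ≠ 0) :
    ∑ x : ZMod p, ((quadraticChar (ZMod p)).ringHomComp (Int.castRingHom ℂ)) x
        * ZMod.stdAddChar (b * x)
      = ((quadraticChar (ZMod p)).ringHomComp (Int.castRingHom ℂ)) b
        * gaussSum ((quadraticChar (ZMod p)).ringHomComp (Int.castRingHom ℂ)) ZMod.stdAddChar := by
  set χ : MulChar (ZMod p) ℂ := (quadraticChar (ZMod p)).ringHomComp (Int.castRingHom ℂ) with hχ
  set ψ : AddChar (ZMod p) ℂ := ZMod.stdAddChar with hψ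
  have hu : IsUnit b := hb.isUnit
  have h1 := gaussSum_mulShift χ ψ hu.unit
  have h2 : gaussSum χ (ψ.mulShift hu.unit) = ∑ x : ZMod p, χ x * ψ (b * x) := by
    simp [gaussSum, AddChar.mulShift_apply, hu.unit_spec]
  have hsq : χ b * χ b = 1 := by
    have h3 : χ (b * b) = 1 := by
      rw [show b * b = b ^ 2 by ring]
      simp [hχ, MulChar.ringHomComp_apply, quadraticChar_sq_one' hb]
    rwa [_root_.map_mul] at h3
  calc ∑ x : ZMod p, χ x * ψ (b * x)
      = (χ b * χ b) * gaussSum χ (ψ.mulShift hu.unit) := by rw [← h2, hsq, one_mul]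
    _ = χ b * (χ ↑hu.unit * gaussSum χ (ψ.mulShift hu.unit)) := by
        rw [hu.unit_spec]; ring
    _ = χ b * gaussSum χ ψ := by rw [h1]

open Finset in
private lemma aux_sq_sum {p : ℕ} [Fact p.Prime] (hodd : p ≠ 2) {a : ZMod p} (ha : a ≠ 0) :
    ∑ w : ZMod p, ZMod.stdAddChar (a * w ^ 2)
      = ((quadraticChar (ZMod p)).ringHomComp (Int.castRingHom ℂ)) a
        * gaussSum ((quadraticChar (ZMod p)).ringHomComp (Int.castRingHom ℂ)) ZMod.stdAddChar := by
  classical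
  haveI : NeZero p := ⟨(Fact.out : p.Prime).ne_zero⟩
  set χ : MulChar (ZMod p) ℂ := (quadraticChar (ZMod p)).ringHomComp (Int.castRingHom ℂ) with hχ
  set ψ : AddChar (ZMod p) ℂ := ZMod.stdAddChar with hψ
  have hψprim : ψ.IsPrimitive := ZMod.isPrimitive_stdAddChar p
  have hchar : ringChar (ZMod p) ≠ 2 := by rw [ZMod.ringChar_zmod_n]; exact hodd
  have hfib := Finset.sum_fiberwise' univ (fun w : ZMod p => w ^ 2) (fun s => ψ (a * s))
  have hcard : ∀ s : ZMod p, (((univ.filter (fun w : ZMod p => w ^ 2 = s)).card : ℕ) : ℂ)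
      = χ s + 1 := by
    intro s
    have h := quadraticChar_card_sqrts hchar s
    rw [show {x : ZMod p | x ^ 2 = s}.toFinset = univ.filter (fun w : ZMod p => w ^ 2 = s) by
      ext x; simp] at h
    have h2 : (((univ.filter (fun w : ZMod p => w ^ 2 = s)).card : ℤ) : ℂ)
        = (((quadraticChar (ZMod p)) s : ℤ) : ℂ) + 1 := by rw [h]; push_cast; ring
    have h3 : χ s = (((quadraticChar (ZMod p)) s : ℤ) : ℂ) := by
      simp [hχ, MulChar.ringHomComp_apply]
    rw [h3]
    exact_mod_cast h2
  calc ∑ w : ZMod p, ψ (a * w ^ 2)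
      = ∑ s : ZMod p, ∑ _w ∈ univ.filter (fun w : ZMod p => w ^ 2 = s), ψ (a * s) := hfib.symm
    _ = ∑ s : ZMod p, (χ s + 1) * ψ (a * s) := by
        refine sum_congr rfl fun s _ => ?_
        rw [Finset.sum_const, nsmul_eq_mul, hcard]
    _ = (∑ s : ZMod p, χ s * ψ (a * s)) + ∑ s : ZMod p, ψ (a * s) := by
        rw [← Finset.sum_add_distrib]
        exact sum_congr rfl fun s _ => by ring
    _ = χ a * gaussSum χ ψ + 0 := by
        have h5 : ∑ s : ZMod p, ψ (a * s) = 0 := by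
          have h4 : ∑ s : ZMod p, ψ (a * s) = ∑ s : ZMod p, ψ (s * a) := by
            simp only [mul_comm]
          rw [h4, AddChar.sum_mulShift a hψprim]
          simp [ha]
        rw [aux_shift ha, h5]
    _ = χ a * gaussSum χ ψ := add_zero _

/-- Let `p` be an odd prime and `M = [[l, r/2],[r/2, 1]]` positive
definite half-integral with `m = det(2M) = 4l − r²`. For a row vector `λ = (λ₁,λ₂) ∈ ℤ²`,
with `G(λ) = Σ_{x ∈ (ℤ/pℤ)ˣ} e((λMᵗλ)x/p)` (where `λMᵗλ = lλ₁² + rλ₁λ₂ + λ₂²`), one has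
`Σ_{u mod p} G(λ + (0,u)) = 0` if `p ∣ λ₁`, and `= p·((−m)/p)` (Legendre symbol)
otherwise. -/
theorem statement_7 (p : ℕ) [Fact p.Prime] (hodd : p ≠ 2)
    (l r : ℤ) (hpos : 0 < 4 * l - r ^ 2)
    (m : ℤ) (hm : m = 4 * l - r ^ 2)
    (lam₁ lam₂ : ℤ) :
    ∑ u ∈ Finset.range p, ∑ t : (ZMod p)ˣ,
        Complex.exp (2 * Real.pi * Complex.I *
          ((((l * lam₁ ^ 2 + r * lam₁ * (lam₂ + (u : ℤ)) + (lam₂ + (u : ℤ)) ^ 2)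
              * (((t : ZMod p).val : ℤ)) : ℤ) : ℂ)) / (p : ℂ))
      = if (p : ℤ) ∣ lam₁ then 0 else (p : ℂ) * ((legendreSym p (-m) : ℤ) : ℂ) := by
  classical
  have hp : p.Prime := Fact.out
  haveI : NeZero p := ⟨hp.ne_zero⟩
  set χ : MulChar (ZMod p) ℂ := (quadraticChar (ZMod p)).ringHomComp (Int.castRingHom ℂ) with hχ
  set ψ : AddChar (ZMod p) ℂ := ZMod.stdAddChar with hψ
  set g : ℂ := gaussSum χ ψ with hg
  have hchar : ringChar (ZMod p) ≠ 2 := by rw [ZMod.ringChar_zmod_n]; exact hodd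
  have hχ1 : χ ≠ 1 :=
    (MulChar.ringHomComp_ne_one_iff Int.cast_injective).mpr (quadraticChar_ne_one hchar)
  have hχq : χ.IsQuadratic := (quadraticChar_isQuadratic (ZMod p)).comp _
  have hψprim : ψ.IsPrimitive := ZMod.isPrimitive_stdAddChar p
  have h2 : (2 : ZMod p) ≠ 0 := by
    intro h
    rw [show (2 : ZMod p) = ((2 : ℕ) : ZMod p) by norm_cast, ZMod.natCast_eq_zero_iff]
      at h
    exact hodd ((Nat.prime_dvd_prime_iff_eq hp Nat.prime_two).mp h)
  have h4 : (4 : ZMod p) ≠ 0 := by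
    rw [show (4 : ZMod p) = 2 * 2 by norm_num]; exact mul_ne_zero h2 h2
  set L1 : ZMod p := ((lam₁ : ℤ) : ZMod p) with hL1def
  set L2 : ZMod p := ((lam₂ : ℤ) : ZMod p) with hL2def
  set Rc : ZMod p := ((r : ℤ) : ZMod p) with hRcdef
  set Lc : ZMod p := ((l : ℤ) : ZMod p) with hLcdef
  set mc : ZMod p := ((m : ℤ) : ZMod p) with hmcdef
  have hmc4 : mc = 4 * Lc - Rc ^ 2 := by rw [hmcdef, hm]; push_cast; ring
  set Q : ZMod p → ZMod p := fun v => Lc * L1 ^ 2 + Rc * L1 * (L2 + v) + (L2 + v) ^ 2 with hQ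
  set c : ZMod p := 2 * L2 + Rc * L1 with hc
  set d : ZMod p := 4⁻¹ * mc * L1 ^ 2 with hd
  -- Step 1: rewrite each exponential as the standard additive character of `ZMod p`.
  have hterm : ∀ (u : ℕ) (t : (ZMod p)ˣ),
      Complex.exp (2 * Real.pi * Complex.I *
          ((((l * lam₁ ^ 2 + r * lam₁ * (lam₂ + (u : ℤ)) + (lam₂ + (u : ℤ)) ^ 2)
              * (((t : ZMod p).val : ℤ)) : ℤ) : ℂ)) / (p : ℂ))
        = ψ (Q ((u : ℕ) : ZMod p) * (t : ZMod p)) := by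
    intro u t
    rw [hψ, ← ZMod.stdAddChar_coe]
    congr 1
    push_cast [ZMod.natCast_val, ZMod.cast_id]
    rw [hQ]
  -- Step 2: reindex `u ∈ range p` by `v : ZMod p`.
  have hrange : ∀ f : ZMod p → ℂ,
      ∑ u ∈ Finset.range p, f ((u : ℕ) : ZMod p) = ∑ v : ZMod p, f v := by
    intro f
    refine Finset.sum_nbij' (fun u => ((u : ℕ) : ZMod p)) (fun v => v.val)
      (fun _ _ => Finset.mem_univ _)
      (fun v _ => Finset.mem_range.mpr (ZMod.val_lt v))
      (fun u hu => ZMod.val_cast_of_lt (Finset.mem_range.mp hu))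
      (fun v _ => ZMod.natCast_rightInverse v)
      (fun u _ => rfl)
  -- completing the square
  have hcomplete : ∀ (t : (ZMod p)ˣ) (v : ZMod p),
      Q v * (t : ZMod p) = ((t : ZMod p) * 4⁻¹) * (2 * v + c) ^ 2 + (t : ZMod p) * d := by
    intro t v
    have h4Q : (4 : ZMod p) * Q v = (2 * v + c) ^ 2 + mc * L1 ^ 2 := by
      rw [hQ, hc, hmc4]; ring
    have hQv : Q v = 4⁻¹ * ((2 * v + c) ^ 2 + mc * L1 ^ 2) := by
      rw [← h4Q, ← mul_assoc, inv_mul_cancel₀ h4, one_mul]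
    rw [hQv, hd]; ring
  -- sum over v for a fixed unit t
  have hinner : ∀ t : (ZMod p)ˣ,
      ∑ v : ZMod p, ψ (Q v * (t : ZMod p))
        = χ ((t : ZMod p) * 4⁻¹) * g * ψ ((t : ZMod p) * d) := by
    intro t
    have ht0 : (t : ZMod p) ≠ 0 := t.ne_zero
    have ha : (t : ZMod p) * 4⁻¹ ≠ 0 := mul_ne_zero ht0 (inv_ne_zero h4)
    calc ∑ v : ZMod p, ψ (Q v * (t : ZMod p))
        = ∑ v : ZMod p, ψ (((t : ZMod p) * 4⁻¹) * (2 * v + c) ^ 2) * ψ ((t : ZMod p) * d) := by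
          refine Finset.sum_congr rfl fun v _ => ?_
          rw [hcomplete t v, AddChar.map_add_eq_mul]
      _ = (∑ v : ZMod p, ψ (((t : ZMod p) * 4⁻¹) * (2 * v + c) ^ 2)) * ψ ((t : ZMod p) * d) := by
          rw [← Finset.sum_mul]
      _ = (∑ w : ZMod p, ψ (((t : ZMod p) * 4⁻¹) * w ^ 2)) * ψ ((t : ZMod p) * d) := by
          congr 1
          refine Fintype.sum_equiv ((Equiv.mulLeft₀ 2 h2).trans (Equiv.addRight c)) _ _
            fun v => ?_
          simp [Equiv.mulLeft₀]
      _ = χ ((t : ZMod p) * 4⁻¹) * g * ψ ((t : ZMod p) * d) := by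
          rw [aux_sq_sum hodd ha, hg]
  -- convert the sum over units to a sum over `ZMod p`
  have hunits : ∀ f : ZMod p → ℂ, f 0 = 0 →
      ∑ t : (ZMod p)ˣ, f (t : ZMod p) = ∑ x : ZMod p, f x := by
    intro f hf
    have hsub : ∑ x ∈ Finset.univ.filter (fun a : ZMod p => a ≠ 0), f x
        = ∑ x : {a : ZMod p // a ≠ 0}, f (x : ZMod p) :=
      Finset.sum_subtype _ (fun x => by simp) f
    have hfil : ∑ x ∈ Finset.univ.filter (fun a : ZMod p => a ≠ 0), f x
        = ∑ x : ZMod p, f x :=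
      Finset.sum_filter_of_ne (fun x _ hx => by intro h0; rw [h0] at hx; exact hx hf)
    rw [← hfil, hsub]
    exact Fintype.sum_equiv unitsEquivNeZero _ _ fun t => rfl
  -- main computation
  have hmain : ∑ u ∈ Finset.range p, ∑ t : (ZMod p)ˣ,
      Complex.exp (2 * Real.pi * Complex.I *
          ((((l * lam₁ ^ 2 + r * lam₁ * (lam₂ + (u : ℤ)) + (lam₂ + (u : ℤ)) ^ 2)
              * (((t : ZMod p).val : ℤ)) : ℤ) : ℂ)) / (p : ℂ))
      = g * χ 4⁻¹ * ∑ x : ZMod p, χ x * ψ (d * x) := by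
    calc ∑ u ∈ Finset.range p, ∑ t : (ZMod p)ˣ,
          Complex.exp (2 * Real.pi * Complex.I *
            ((((l * lam₁ ^ 2 + r * lam₁ * (lam₂ + (u : ℤ)) + (lam₂ + (u : ℤ)) ^ 2)
                * (((t : ZMod p).val : ℤ)) : ℤ) : ℂ)) / (p : ℂ))
        = ∑ u ∈ Finset.range p, ∑ t : (ZMod p)ˣ, ψ (Q ((u : ℕ) : ZMod p) * (t : ZMod p)) := by
          exact Finset.sum_congr rfl fun u _ => Finset.sum_congr rfl fun t _ => hterm u t
      _ = ∑ t : (ZMod p)ˣ, ∑ u ∈ Finset.range p, ψ (Q ((u : ℕ) : ZMod p) * (t : ZMod p)) :=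
          Finset.sum_comm
      _ = ∑ t : (ZMod p)ˣ, ∑ v : ZMod p, ψ (Q v * (t : ZMod p)) := by
          exact Finset.sum_congr rfl fun t _ => hrange (fun v => ψ (Q v * (t : ZMod p)))
      _ = ∑ t : (ZMod p)ˣ, χ ((t : ZMod p) * 4⁻¹) * g * ψ ((t : ZMod p) * d) := by
          exact Finset.sum_congr rfl fun t _ => hinner t
      _ = ∑ x : ZMod p, χ (x * 4⁻¹) * g * ψ (x * d) := by
          refine hunits (fun x => χ (x * 4⁻¹) * g * ψ (x * d)) ?_
          simp only [zero_mul]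
          rw [χ.map_zero, zero_mul, zero_mul]
      _ = g * χ 4⁻¹ * ∑ x : ZMod p, χ x * ψ (d * x) := by
          rw [Finset.mul_sum]
          refine Finset.sum_congr rfl fun x _ => ?_
          rw [_root_.map_mul, mul_comm d x]
          ring
  rw [hmain]
  by_cases hdvd : (p : ℤ) ∣ lam₁
  · rw [if_pos hdvd]
    have hL10 : L1 = 0 := (ZMod.intCast_zmod_eq_zero_iff_dvd _ _).mpr hdvd
    have hd0 : d = 0 := by rw [hd, hL10]; ring
    have : ∑ x : ZMod p, χ x * ψ (d * x) = 0 := by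
      rw [hd0]
      simp only [zero_mul, AddChar.map_zero_eq_one, mul_one]
      exact MulChar.sum_eq_zero_of_ne_one hχ1
    rw [this, mul_zero]
  · rw [if_neg hdvd]
    have hL1 : L1 ≠ 0 := fun h => hdvd ((ZMod.intCast_zmod_eq_zero_iff_dvd _ _).mp h)
    by_cases hmc : mc = 0
    · have hd0 : d = 0 := by rw [hd, hmc]; ring
      have hs : ∑ x : ZMod p, χ x * ψ (d * x) = 0 := by
        rw [hd0]
        simp only [zero_mul, AddChar.map_zero_eq_one, mul_one]
        exact MulChar.sum_eq_zero_of_ne_one hχ1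
      have hleg : legendreSym p (-m) = 0 := by
        rw [legendreSym.eq_zero_iff]
        push_cast
        rw [← hmcdef] at *
        rw [hmc, neg_zero]
      rw [hs, mul_zero, hleg]
      norm_num
    · have hd0 : d ≠ 0 := by
        rw [hd]
        exact mul_ne_zero (mul_ne_zero (inv_ne_zero h4) hmc) (pow_ne_zero 2 hL1)
      rw [aux_shift hd0]
      have hgsq : g ^ 2 = χ (-1) * (p : ℂ) := by
        rw [hg, gaussSum_sq hχ1 hχq hψprim, ZMod.card]
      have hrw : g * χ 4⁻¹ * (χ d * g) = (χ 4⁻¹ * χ d * χ (-1)) * (p : ℂ) := by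
        have : g * χ 4⁻¹ * (χ d * g) = χ 4⁻¹ * χ d * g ^ 2 := by ring
        rw [this, hgsq]; ring
      rw [hrw]
      have hprod : χ 4⁻¹ * χ d * χ (-1) = χ (-mc) * χ ((4⁻¹ * L1) ^ 2) := by
        rw [← _root_.map_mul, ← _root_.map_mul, ← _root_.map_mul]
        congr 1
        rw [hd]; ring
      have hone : χ ((4⁻¹ * L1) ^ 2) = 1 := by
        have hne : 4⁻¹ * L1 ≠ 0 := mul_ne_zero (inv_ne_zero h4) hL1
        simp [hχ, MulChar.ringHomComp_apply, quadraticChar_sq_one' hne]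
      have hfin : χ (-mc) = ((legendreSym p (-m) : ℤ) : ℂ) := by
        rw [legendreSym]
        have : ((-m : ℤ) : ZMod p) = -mc := by rw [hmcdef]; push_cast; ring
        rw [this]
        simp [hχ, MulChar.ringHomComp_apply]
      rw [hprod, hone, mul_one, hfin, mul_comm]
end

section
/- Let p be an odd prime, u ∈ ℤ with p ∤ u, and consider the diagonal form M = diag(u, 1) over ℤ/pℤ. For λ ∈ (ℤ/pℤ)^{2×2}, define the rank-1 Gauss sum G₁(λ) = Σ_{x symmetric 2×2 over ℤ/pℤ, rank x = 1} e(tr(M ᵗλ x λ)/p). Then: (i) if λ = 0, G₁(λ) = p² − 1; (ii) if rank λ = 2, G₁(λ) = ((−u)/p)·p − 1; (iii) if rank λ = 1 and λ ≡ (λ', t λ') columnwise with u + t² ≡ 0 mod p, then G₁(λ) = p² − 1; (iv) if rank λ = 1 and λ ≡ (λ', t λ') with u + t² ≢ 0 mod p, or λ ≡ (0, λ') with λ' ≠ 0, then G₁(λ) = −1. -/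
open Matrix
open scoped Classical
set_option linter.unusedSectionVars false
set_option maxHeartbeats 1000000

/-- The rank-one Gauss sum
`G₁(λ) = Σ_{x symmetric, rank x = 1} e(tr(diag(u,1) ᵗλ x λ)/p)` over `ℤ/pℤ`. -/
noncomputable def rankOneGaussSum (p : ℕ) [NeZero p] (u : ℤ)
    (lam : Matrix (Fin 2) (Fin 2) (ZMod p)) : ℂ :=
  ∑ x : Fin 2 → Fin 2 → ZMod p,
    if (Matrix.of x).IsSymm ∧ (Matrix.of x).rank = 1 then
      Complex.exp (2 * Real.pi * Complex.I *
        ((((Matrix.diagonal ![(u : ZMod p), 1] * lamᵀ * Matrix.of x * lam).trace).val : ℕ) : ℂ)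
          / (p : ℂ))
    else 0

namespace St8

variable (p : ℕ) [Fact p.Prime]


variable (p : ℕ) [Fact p.Prime]

noncomputable def ψ (a : ZMod p) : ℂ :=
  Complex.exp (2 * Real.pi * Complex.I * ((a.val : ℕ) : ℂ) / (p : ℂ))

noncomputable def ζ : ℂ := Complex.exp (2 * Real.pi * Complex.I / (p : ℂ))

lemma hp_pos : 0 < p := (Fact.out : p.Prime).pos

lemma hp_ne : (p : ℂ) ≠ 0 := by
  exact_mod_cast Nat.cast_ne_zero.mpr (hp_pos p).ne'

lemma psi_eq (a : ZMod p) : ψ p a = ζ p ^ a.val := by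
  rw [ψ, ζ, ← Complex.exp_nat_mul]
  congr 1
  ring

lemma zeta_pow_p : ζ p ^ p = 1 := by
  rw [ζ, ← Complex.exp_nat_mul]
  rw [show (p : ℂ) * (2 * Real.pi * Complex.I / (p : ℂ)) = 2 * Real.pi * Complex.I by
    rw [mul_div_assoc']
    exact mul_div_cancel_left₀ _ (hp_ne p)]
  exact Complex.exp_two_pi_mul_I

lemma zeta_ne_one : ζ p ≠ 1 := by
  intro h
  rw [ζ, Complex.exp_eq_one_iff] at h
  obtain ⟨n, hn⟩ := h
  have hπ : (2 * (Real.pi : ℂ) * Complex.I) ≠ 0 := by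
    simp [Real.pi_ne_zero, Complex.I_ne_zero, Complex.ofReal_ne_zero]
  have h2 := congrArg (· * (p : ℂ)) hn
  simp only [div_mul_cancel₀ _ (hp_ne p)] at h2
  have h3 : (2 * (Real.pi : ℂ) * Complex.I) * 1
      = (2 * (Real.pi : ℂ) * Complex.I) * ((n : ℂ) * p) := by
    linear_combination h2
  have h4 : (1 : ℂ) = ((n * p : ℤ) : ℂ) := by push_cast; exact mul_left_cancel₀ hπ h3
  have h5 : (1 : ℤ) = n * p := by exact_mod_cast h4
  have hdvd : (p : ℤ) ∣ 1 := ⟨n, by linarith⟩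
  have h6 : (p : ℤ) ≤ 1 := Int.le_of_dvd one_pos hdvd
  have h7 : (2 : ℤ) ≤ (p : ℤ) := by exact_mod_cast (Fact.out : p.Prime).two_le
  linarith

lemma zeta_pow_mod (n : ℕ) : ζ p ^ (n % p) = ζ p ^ n := by
  conv_rhs => rw [← Nat.mod_add_div n p]
  rw [pow_add, pow_mul, zeta_pow_p, one_pow, mul_one]

lemma psi_add (a b : ZMod p) : ψ p (a + b) = ψ p a * ψ p b := by
  rw [psi_eq, psi_eq, psi_eq, ZMod.val_add, zeta_pow_mod, pow_add]

lemma psi_zero : ψ p 0 = 1 := by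
  rw [psi_eq]
  simp

lemma sum_psi : ∑ a : ZMod p, ψ p a = 0 := by
  have h1 : ∑ a : ZMod p, ψ p a = ∑ n ∈ Finset.range p, ζ p ^ n := by
    refine Finset.sum_nbij' (fun a => a.val) (fun n => (n : ZMod p)) ?_ ?_ ?_ ?_ ?_
    · intro a _; exact Finset.mem_range.mpr (ZMod.val_lt a)
    · intro n _; exact Finset.mem_univ _
    · intro a _; simp [ZMod.natCast_val, ZMod.cast_id]
    · intro n hn; exact ZMod.val_natCast_of_lt (Finset.mem_range.mp hn)
    · intro a _; exact psi_eq p a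
  rw [h1, geom_sum_eq (zeta_ne_one p), zeta_pow_p]
  simp

lemma sum_psi_mul (q : ZMod p) :
    ∑ a : ZMod p, ψ p (a * q) = if q = 0 then (p : ℂ) else 0 := by
  split_ifs with h
  · simp only [h, mul_zero, psi_zero, Finset.sum_const, Finset.card_univ, ZMod.card,
      nsmul_eq_mul, mul_one]
  · rw [← sum_psi p]
    exact Fintype.sum_equiv (Equiv.mulRight₀ q h) _ _ (fun a => rfl)

lemma sum_psi_units (q : ZMod p) :
    ∑ a ∈ Finset.univ.erase (0 : ZMod p), ψ p (a * q)
      = if q = 0 then ((p : ℂ) - 1) else -1 := by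
  have h := Finset.sum_erase_eq_sub (f := fun a : ZMod p => ψ p (a * q))
    (Finset.mem_univ (0 : ZMod p))
  rw [h, sum_psi_mul]
  simp only [zero_mul, psi_zero]
  split_ifs <;> ring




-- rank lemmas
lemma rank_le_one_of_det {A : Matrix (Fin 2) (Fin 2) (ZMod p)} (h : A.det = 0) :
    A.rank ≤ 1 := by
  obtain ⟨v, hv, hAv⟩ := (Matrix.exists_mulVec_eq_zero_iff).mpr h
  have hrn := LinearMap.finrank_range_add_finrank_ker A.mulVecLin
  rw [Module.finrank_fin_fun] at hrn
  have hker : 0 < Module.finrank (ZMod p) (LinearMap.ker A.mulVecLin) := by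
    rw [Module.finrank_pos_iff]
    refine ⟨⟨⟨v, ?_⟩, 0, ?_⟩⟩
    · rw [LinearMap.mem_ker, Matrix.mulVecLin_apply, hAv]
    · simp [Subtype.ext_iff, hv]
  have : A.rank + Module.finrank (ZMod p) (LinearMap.ker A.mulVecLin) = 2 := hrn
  omega

lemma rank_pos_of_ne {A : Matrix (Fin 2) (Fin 2) (ZMod p)} (h : A ≠ 0) :
    0 < A.rank := by
  rcases Nat.eq_zero_or_pos A.rank with h1 | h1
  swap
  · exact h1
  · exfalso
    apply h
    have : LinearMap.range A.mulVecLin = ⊥ := by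
      rw [← Submodule.finrank_eq_zero]
      exact h1
    rw [LinearMap.range_eq_bot] at this
    ext i j
    have h2 : A.mulVec (Pi.single j 1) = 0 := by
      rw [← Matrix.mulVecLin_apply, this]; rfl
    rw [Matrix.mulVec_single] at h2
    simpa using congrFun h2 i

lemma rank_eq_one_iff {A : Matrix (Fin 2) (Fin 2) (ZMod p)} :
    A.rank = 1 ↔ A ≠ 0 ∧ A.det = 0 := by
  constructor
  · intro h
    constructor
    · intro h0; rw [h0, Matrix.rank_zero] at h; simp at h
    · by_contra hd
      have : IsUnit A := (Matrix.isUnit_iff_isUnit_det A).mpr (isUnit_iff_ne_zero.mpr hd)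
      rw [Matrix.rank_of_isUnit A this] at h
      simp [Fintype.card_fin] at h
  · rintro ⟨h0, hd⟩
    have h1 := rank_le_one_of_det p hd
    have h2 := rank_pos_of_ne p h0
    omega

lemma det_ne_zero_of_rank_two {A : Matrix (Fin 2) (Fin 2) (ZMod p)} (h : A.rank = 2) :
    A.det ≠ 0 := by
  intro hd
  have := rank_le_one_of_det p hd
  omega

-- parametrization data
def W (o : Option (ZMod p)) : Fin 2 → ZMod p := o.elim ![0, 1] fun s => ![1, s]

def φ (c : ZMod p) (o : Option (ZMod p)) : Fin 2 → Fin 2 → ZMod p :=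
  fun i j => c * W p o i * W p o j

def Q (u : ℤ) (lam : Matrix (Fin 2) (Fin 2) (ZMod p)) (w : Fin 2 → ZMod p) : ZMod p :=
  (u : ZMod p) * (lam 0 0 * w 0 + lam 1 0 * w 1) ^ 2
    + (lam 0 1 * w 0 + lam 1 1 * w 1) ^ 2

lemma trace_formula (u : ℤ) (lam : Matrix (Fin 2) (Fin 2) (ZMod p))
    (c : ZMod p) (w : Fin 2 → ZMod p) :
    (Matrix.diagonal ![(u : ZMod p), 1] * lamᵀ * Matrix.of (fun i j => c * w i * w j)
      * lam).trace = c * ((u : ZMod p) * (lam 0 0 * w 0 + lam 1 0 * w 1) ^ 2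
        + (lam 0 1 * w 0 + lam 1 1 * w 1) ^ 2) := by
  simp [Matrix.trace, Matrix.mul_apply, Fin.sum_univ_two, Matrix.diagonal,
    Matrix.transpose_apply, Matrix.of_apply]
  ring

lemma W_none_0 : W p none 0 = 0 := rfl
lemma W_none_1 : W p none 1 = 1 := rfl
lemma W_some_0 (s : ZMod p) : W p (some s) 0 = 1 := rfl
lemma W_some_1 (s : ZMod p) : W p (some s) 1 = s := rfl

lemma phi_mem (c : ZMod p) (hc : c ≠ 0) (o : Option (ZMod p)) :
    (Matrix.of (φ p c o)).IsSymm ∧ (Matrix.of (φ p c o)).rank = 1 := by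
  constructor
  · ext i j
    simp only [Matrix.transpose_apply, Matrix.of_apply, φ]
    ring
  · rw [rank_eq_one_iff]
    constructor
    · intro h0
      cases o with
      | none =>
        have := congrFun (congrFun h0 1) 1
        simp [φ, W_none_1] at this
        exact hc this
      | some s =>
        have := congrFun (congrFun h0 0) 0
        simp [φ, W_some_0] at this
        exact hc this
    · rw [Matrix.det_fin_two]
      simp only [Matrix.of_apply, φ]
      ring

lemma struct_of_mem {x : Fin 2 → Fin 2 → ZMod p}
    (hx : (Matrix.of x).IsSymm ∧ (Matrix.of x).rank = 1) :
    x 1 0 = x 0 1 ∧ x 0 0 * x 1 1 = x 0 1 * x 0 1 ∧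
      (x 0 0 ≠ 0 ∨ (x 0 1 = 0 ∧ x 1 0 = 0 ∧ x 1 1 ≠ 0)) := by
  obtain ⟨hsym, hrk⟩ := hx
  rw [rank_eq_one_iff] at hrk
  obtain ⟨hne, hdet⟩ := hrk
  have hs : x 1 0 = x 0 1 := hsym.apply 0 1
  rw [Matrix.det_fin_two] at hdet
  simp only [Matrix.of_apply] at hdet
  have hd : x 0 0 * x 1 1 = x 0 1 * x 0 1 := by
    rw [sub_eq_zero] at hdet; rw [hdet, hs]
  refine ⟨hs, hd, ?_⟩
  by_cases h00 : x 0 0 = 0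
  · right
    have h01 : x 0 1 = 0 := by
      have : x 0 1 * x 0 1 = 0 := by rw [← hd, h00, zero_mul]
      exact mul_self_eq_zero.mp this
    refine ⟨h01, hs.trans h01, ?_⟩
    intro h11
    apply hne
    ext i j
    simp only [Matrix.of_apply, Matrix.zero_apply]
    fin_cases i <;> fin_cases j <;> simp_all
  · exact Or.inl h00

lemma funext2 {f g : Fin 2 → Fin 2 → ZMod p} (h00 : f 0 0 = g 0 0) (h01 : f 0 1 = g 0 1)
    (h10 : f 1 0 = g 1 0) (h11 : f 1 1 = g 1 1) : f = g := by
  funext i j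
  fin_cases i <;> fin_cases j
  · exact h00
  · exact h01
  · exact h10
  · exact h11

noncomputable def ξ (x : Fin 2 → Fin 2 → ZMod p) : ZMod p × Option (ZMod p) :=
  if x 0 0 ≠ 0 then (x 0 0, some (x 0 1 / x 0 0)) else (x 1 1, none)

lemma phi_xi {x : Fin 2 → Fin 2 → ZMod p}
    (hx : (Matrix.of x).IsSymm ∧ (Matrix.of x).rank = 1) :
    φ p (ξ p x).1 (ξ p x).2 = x := by
  obtain ⟨hs, hd, hcase⟩ := struct_of_mem p hx
  by_cases h00 : x 0 0 = 0
  · rcases hcase with h | ⟨h01, h10, h11⟩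
    · exact absurd h00 h
    · rw [ξ, if_neg (by simp [h00])]
      refine funext2 p ?_ ?_ ?_ ?_ <;>
        simp [φ, W_none_0, W_none_1, h00, h01, h10]
  · rw [ξ, if_pos h00]
    refine funext2 p ?_ ?_ ?_ ?_ <;>
      simp only [φ, W_some_0, W_some_1]
    · simp
    · field_simp
    · rw [hs]; field_simp
    · field_simp
      linear_combination -hd

lemma xi_mem {x : Fin 2 → Fin 2 → ZMod p}
    (hx : (Matrix.of x).IsSymm ∧ (Matrix.of x).rank = 1) :
    ξ p x ∈ (Finset.univ.erase (0 : ZMod p)) ×ˢ (Finset.univ : Finset (Option (ZMod p))) := by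
  obtain ⟨hs, hd, hcase⟩ := struct_of_mem p hx
  by_cases h00 : x 0 0 = 0
  · rcases hcase with h | ⟨h01, h10, h11⟩
    · exact absurd h00 h
    · rw [ξ, if_neg (by simp [h00])]
      exact Finset.mk_mem_product (Finset.mem_erase.mpr ⟨h11, Finset.mem_univ _⟩)
        (Finset.mem_univ _)
  · rw [ξ, if_pos h00]
    exact Finset.mk_mem_product (Finset.mem_erase.mpr ⟨h00, Finset.mem_univ _⟩)
      (Finset.mem_univ _)

lemma xi_phi (c : ZMod p) (hc : c ≠ 0) (o : Option (ZMod p)) :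
    ξ p (φ p c o) = (c, o) := by
  cases o with
  | none =>
    have h00 : φ p c none 0 0 = 0 := by simp [φ, W_none_0]
    rw [ξ, if_neg (by simp [h00])]
    have h11 : φ p c none 1 1 = c := by simp [φ, W_none_1]
    simp [h11]
  | some s =>
    have h00 : φ p c (some s) 0 0 = c := by simp [φ, W_some_0]
    have h01 : φ p c (some s) 0 1 = c * s := by simp [φ, W_some_0, W_some_1]
    rw [ξ, if_pos (by simp [h00, hc])]
    rw [h00, h01, mul_comm c s, mul_div_assoc, div_self hc, mul_one]

lemma param_sum (f : (Fin 2 → Fin 2 → ZMod p) → ℂ) :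
    ∑ x ∈ Finset.univ.filter
        (fun x : Fin 2 → Fin 2 → ZMod p => (Matrix.of x).IsSymm ∧ (Matrix.of x).rank = 1), f x
      = ∑ co ∈ (Finset.univ.erase (0 : ZMod p)) ×ˢ (Finset.univ : Finset (Option (ZMod p))),
          f (φ p co.1 co.2) := by
  refine Finset.sum_nbij' (i := fun x => ξ p x) (j := fun co => φ p co.1 co.2) ?_ ?_ ?_ ?_ ?_
  · intro x hx
    exact xi_mem p (Finset.mem_filter.mp hx).2
  · rintro ⟨c, o⟩ hco
    have hc : c ≠ 0 := (Finset.mem_erase.mp (Finset.mem_product.mp hco).1).1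
    exact Finset.mem_filter.mpr ⟨Finset.mem_univ _, phi_mem p c hc o⟩
  · intro x hx
    exact phi_xi p (Finset.mem_filter.mp hx).2
  · rintro ⟨c, o⟩ hco
    have hc : c ≠ 0 := (Finset.mem_erase.mp (Finset.mem_product.mp hco).1).1
    exact xi_phi p c hc o
  · intro x hx
    rw [phi_xi p (Finset.mem_filter.mp hx).2]


lemma trace_formula' (u : ℤ) (lam : Matrix (Fin 2) (Fin 2) (ZMod p))
    (c : ZMod p) (o : Option (ZMod p)) :
    (Matrix.diagonal ![(u : ZMod p), 1] * lamᵀ * Matrix.of (φ p c o) * lam).trace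
      = c * Q p u lam (W p o) :=
  trace_formula p u lam c (W p o)

lemma gauss_eq (u : ℤ) (lam : Matrix (Fin 2) (Fin 2) (ZMod p)) :
    rankOneGaussSum p u lam
      = ∑ o : Option (ZMod p),
          (if Q p u lam (W p o) = 0 then ((p : ℂ) - 1) else -1) := by
  have h1 : rankOneGaussSum p u lam
      = ∑ x ∈ Finset.univ.filter
          (fun x : Fin 2 → Fin 2 → ZMod p => (Matrix.of x).IsSymm ∧ (Matrix.of x).rank = 1),
          ψ p ((Matrix.diagonal ![(u : ZMod p), 1] * lamᵀ * Matrix.of x * lam).trace) := by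
    rw [rankOneGaussSum, Finset.sum_filter]
    rfl
  rw [h1, param_sum p, Finset.sum_product, Finset.sum_comm]
  refine Finset.sum_congr rfl fun o _ => ?_
  rw [← sum_psi_units p (Q p u lam (W p o))]
  refine Finset.sum_congr rfl fun c hc => ?_
  rw [trace_formula']

lemma L_allzero (g : Option (ZMod p) → ZMod p) (x y : ℂ) (h : ∀ o, g o = 0) :
    ∑ o : Option (ZMod p), (if g o = 0 then x else y) = ((p : ℂ) + 1) * x := by
  rw [Finset.sum_congr rfl fun o _ => if_pos (h o), Finset.sum_const,
    Finset.card_univ, Fintype.card_option, ZMod.card]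
  push_cast
  ring

lemma L_none (g : Option (ZMod p) → ZMod p) (x y : ℂ) (h : ∀ o, ¬ g o = 0) :
    ∑ o : Option (ZMod p), (if g o = 0 then x else y) = ((p : ℂ) + 1) * y := by
  rw [Finset.sum_congr rfl fun o _ => if_neg (h o), Finset.sum_const,
    Finset.card_univ, Fintype.card_option, ZMod.card]
  push_cast
  ring

lemma L_one (g : Option (ZMod p) → ZMod p) (x y : ℂ) (o₀ : Option (ZMod p))
    (h : ∀ o, g o = 0 ↔ o = o₀) :
    ∑ o : Option (ZMod p), (if g o = 0 then x else y) = x + (p : ℂ) * y := by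
  have e : ∀ o : Option (ZMod p),
      (if g o = 0 then x else y) = y + (if o = o₀ then x - y else 0) := by
    intro o
    by_cases hP : g o = 0
    · rw [if_pos hP, if_pos ((h o).mp hP)]; ring
    · rw [if_neg hP, if_neg fun he => hP ((h o).mpr he)]; ring
  rw [Finset.sum_congr rfl fun o _ => e o, Finset.sum_add_distrib, Finset.sum_const,
    Finset.sum_ite_eq' Finset.univ o₀ fun _ => x - y, if_pos (Finset.mem_univ _),
    Finset.card_univ, Fintype.card_option, ZMod.card]
  push_cast
  ring

lemma L_two (g : Option (ZMod p) → ZMod p) (x y : ℂ) (o₁ o₂ : Option (ZMod p))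
    (hne : o₁ ≠ o₂) (h : ∀ o, g o = 0 ↔ (o = o₁ ∨ o = o₂)) :
    ∑ o : Option (ZMod p), (if g o = 0 then x else y) = 2 * x + ((p : ℂ) - 1) * y := by
  have e : ∀ o : Option (ZMod p),
      (if g o = 0 then x else y)
        = y + ((if o = o₁ then x - y else 0) + (if o = o₂ then x - y else 0)) := by
    intro o
    by_cases h1 : o = o₁
    · rw [if_pos ((h o).mpr (Or.inl h1)), if_pos h1, if_neg (h1 ▸ hne : ¬ o = o₂)]; ring
    · by_cases h2 : o = o₂
      · rw [if_pos ((h o).mpr (Or.inr h2)), if_neg h1, if_pos h2]; ring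
      · rw [if_neg (fun hg => (((h o).mp hg).elim h1 h2)), if_neg h1, if_neg h2]; ring
  rw [Finset.sum_congr rfl fun o _ => e o, Finset.sum_add_distrib, Finset.sum_add_distrib,
    Finset.sum_const, Finset.sum_ite_eq' Finset.univ o₁ fun _ => x - y,
    Finset.sum_ite_eq' Finset.univ o₂ fun _ => x - y, if_pos (Finset.mem_univ _),
    if_pos (Finset.mem_univ _), Finset.card_univ, Fintype.card_option, ZMod.card]
  push_cast
  ring

lemma exists_rep (r s : ZMod p) (h : ¬(r = 0 ∧ s = 0)) :
    ∃ o₀, ∀ o, (r * W p o 0 + s * W p o 1 = 0 ↔ o = o₀) := by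
  by_cases hs : s = 0
  · have hr : r ≠ 0 := fun h' => h ⟨h', hs⟩
    refine ⟨none, fun o => ?_⟩
    cases o with
    | none => simp [W_none_0, W_none_1, hs]
    | some t => simp [W_some_0, W_some_1, hs, hr]
  · refine ⟨some (-(r / s)), fun o => ?_⟩
    cases o with
    | none => simp [W_none_0, W_none_1, hs]
    | some t =>
      simp only [W_some_0, W_some_1, mul_one, Option.some.injEq]
      constructor
      · intro he
        field_simp
        linear_combination he
      · intro he
        rw [he]
        field_simp
        ring

lemma mat_ext (lam : Matrix (Fin 2) (Fin 2) (ZMod p)) (h00 : lam 0 0 = 0)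
    (h01 : lam 0 1 = 0) (h10 : lam 1 0 = 0) (h11 : lam 1 1 = 0) : lam = 0 := by
  ext i j
  fin_cases i <;> fin_cases j
  · exact h00
  · exact h01
  · exact h10
  · exact h11

lemma wzero {o : Option (ZMod p)} (hw0 : W p o 0 = 0) (hw1 : W p o 1 = 0) : False := by
  cases o with
  | none => exact one_ne_zero (W_none_1 p ▸ hw1)
  | some s => exact one_ne_zero (W_some_0 p s ▸ hw0)

end St8

open St8 in
/-- Values of the rank-one Gauss sum `G₁(λ)` for `M = diag(u,1)`,
`p` an odd prime, `p ∤ u`. -/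
theorem statement_8 (p : ℕ) [Fact p.Prime] (hodd : p ≠ 2)
    (u : ℤ) (hu : ¬ (p : ℤ) ∣ u)
    (lam : Matrix (Fin 2) (Fin 2) (ZMod p)) :
    (lam = 0 → rankOneGaussSum p u lam = (p : ℂ) ^ 2 - 1) ∧
    (lam.rank = 2 →
      rankOneGaussSum p u lam = ((legendreSym p (-u) : ℤ) : ℂ) * (p : ℂ) - 1) ∧
    (lam.rank = 1 → ∀ t : ZMod p, (∀ i, lam i 1 = t * lam i 0) →
      (u : ZMod p) + t ^ 2 = 0 → rankOneGaussSum p u lam = (p : ℂ) ^ 2 - 1) ∧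
    (lam.rank = 1 →
      ((∃ t : ZMod p, (∀ i, lam i 1 = t * lam i 0) ∧ (u : ZMod p) + t ^ 2 ≠ 0)
        ∨ (∀ i, lam i 0 = 0)) →
      rankOneGaussSum p u lam = -1) := by
  have hu' : (u : ZMod p) ≠ 0 := by
    rw [Ne, ZMod.intCast_zmod_eq_zero_iff_dvd]
    exact hu
  have h2ne : (2 : ZMod p) ≠ 0 := by
    have : ((2 : ℕ) : ZMod p) ≠ 0 := by
      rw [Ne, ZMod.natCast_eq_zero_iff]
      intro hdvd
      exact hodd ((Nat.prime_dvd_prime_iff_eq (Fact.out : p.Prime) Nat.prime_two).mp hdvd)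
    simpa using this
  refine ⟨?_, ?_, ?_, ?_⟩
  · -- (i) lam = 0
    intro h0
    refine (gauss_eq p u lam).trans ?_
    refine (L_allzero p _ _ (-1) fun o => ?_).trans (by push_cast; ring)
    simp [Q, h0]
  · -- (ii) rank two
    intro h2
    have hdet : lam.det ≠ 0 := det_ne_zero_of_rank_two p h2
    rw [Matrix.det_fin_two] at hdet
    by_cases hsq : IsSquare (-(u : ZMod p))
    · have hleg : legendreSym p (-u) = 1 := by
        rw [legendreSym.eq_one_iff]
        · push_cast
          exact hsq
        · push_cast
          exact neg_ne_zero.mpr hu'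
      obtain ⟨m, hm⟩ := hsq
      have hm0 : m ≠ 0 := by
        intro h
        rw [h, mul_zero, neg_eq_zero] at hm
        exact hu' hm
      obtain ⟨o₁, ho₁⟩ := exists_rep p (lam 0 1 - m * lam 0 0) (lam 1 1 - m * lam 1 0) (by
        rintro ⟨e1, e2⟩
        apply hdet
        linear_combination (lam 0 0) * e2 - (lam 1 0) * e1)
      obtain ⟨o₂, ho₂⟩ := exists_rep p (lam 0 1 + m * lam 0 0) (lam 1 1 + m * lam 1 0) (by
        rintro ⟨e1, e2⟩
        apply hdet
        linear_combination (lam 0 0) * e2 - (lam 1 0) * e1)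
      have hfac : ∀ o : Option (ZMod p), Q p u lam (W p o)
          = ((lam 0 1 - m * lam 0 0) * W p o 0 + (lam 1 1 - m * lam 1 0) * W p o 1)
            * ((lam 0 1 + m * lam 0 0) * W p o 0 + (lam 1 1 + m * lam 1 0) * W p o 1) := by
        intro o
        rw [Q]
        linear_combination (-((lam 0 0 * W p o 0 + lam 1 0 * W p o 1) ^ 2)) * hm
      have hQiff : ∀ o, Q p u lam (W p o) = 0 ↔ (o = o₁ ∨ o = o₂) := by
        intro o
        rw [hfac o, mul_eq_zero, ho₁ o, ho₂ o]
      have ho12 : o₁ ≠ o₂ := by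
        intro he
        have e1 := (ho₁ o₁).mpr rfl
        have e2 := (ho₂ o₁).mpr (by rw [he])
        have hα1 : lam 0 1 * W p o₁ 0 + lam 1 1 * W p o₁ 1 = 0 := by
          have h2m : (2 : ZMod p) * (lam 0 1 * W p o₁ 0 + lam 1 1 * W p o₁ 1) = 0 := by
            linear_combination e1 + e2
          exact (mul_eq_zero.mp h2m).resolve_left h2ne
        have hα0 : lam 0 0 * W p o₁ 0 + lam 1 0 * W p o₁ 1 = 0 := by
          have h2m : ((2 : ZMod p) * m) * (lam 0 0 * W p o₁ 0 + lam 1 0 * W p o₁ 1) = 0 := by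
            linear_combination e2 - e1
          exact (mul_eq_zero.mp h2m).resolve_left (mul_ne_zero h2ne hm0)
        have hw0 : W p o₁ 0 = 0 := by
          have : (lam 0 0 * lam 1 1 - lam 0 1 * lam 1 0) * W p o₁ 0 = 0 := by
            linear_combination (lam 1 1) * hα0 - (lam 1 0) * hα1
          exact (mul_eq_zero.mp this).resolve_left hdet
        have hw1 : W p o₁ 1 = 0 := by
          have : (lam 0 0 * lam 1 1 - lam 0 1 * lam 1 0) * W p o₁ 1 = 0 := by
            linear_combination (-(lam 0 1)) * hα0 + (lam 0 0) * hα1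
          exact (mul_eq_zero.mp this).resolve_left hdet
        exact wzero p hw0 hw1
      refine (gauss_eq p u lam).trans ?_
      refine (L_two p _ _ _ o₁ o₂ ho12 hQiff).trans ?_
      rw [hleg]
      push_cast
      ring
    · have hleg : legendreSym p (-u) = -1 := by
        rw [legendreSym.eq_neg_one_iff]
        push_cast
        exact hsq
      have hQne : ∀ o, ¬ Q p u lam (W p o) = 0 := by
        intro o hQ0
        rw [Q] at hQ0
        by_cases hα0 : lam 0 0 * W p o 0 + lam 1 0 * W p o 1 = 0
        · have hα1 : lam 0 1 * W p o 0 + lam 1 1 * W p o 1 = 0 := by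
            have hsq1 : (lam 0 1 * W p o 0 + lam 1 1 * W p o 1) ^ 2 = 0 := by
              linear_combination hQ0
                - ((u : ZMod p) * (lam 0 0 * W p o 0 + lam 1 0 * W p o 1)) * hα0
            exact sq_eq_zero_iff.mp hsq1
          have hw0 : W p o 0 = 0 := by
            have : (lam 0 0 * lam 1 1 - lam 0 1 * lam 1 0) * W p o 0 = 0 := by
              linear_combination (lam 1 1) * hα0 - (lam 1 0) * hα1
            exact (mul_eq_zero.mp this).resolve_left hdet
          have hw1 : W p o 1 = 0 := by
            have : (lam 0 0 * lam 1 1 - lam 0 1 * lam 1 0) * W p o 1 = 0 := by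
              linear_combination (-(lam 0 1)) * hα0 + (lam 0 0) * hα1
            exact (mul_eq_zero.mp this).resolve_left hdet
          exact wzero p hw0 hw1
        · apply hsq
          refine ⟨(lam 0 1 * W p o 0 + lam 1 1 * W p o 1)
            / (lam 0 0 * W p o 0 + lam 1 0 * W p o 1), ?_⟩
          rw [div_mul_div_comm, eq_div_iff (mul_ne_zero hα0 hα0)]
          linear_combination -hQ0
      refine (gauss_eq p u lam).trans ?_
      refine (L_none p _ _ _ hQne).trans ?_
      rw [hleg]
      push_cast
      ring
  · -- (iii)
    intro _ t ht hut
    refine (gauss_eq p u lam).trans ?_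
    refine (L_allzero p _ _ (-1) fun o => ?_).trans (by push_cast; ring)
    rw [Q, ht 0, ht 1]
    linear_combination ((lam 0 0 * W p o 0 + lam 1 0 * W p o 1) ^ 2) * hut
  · -- (iv)
    intro h1 hcases
    have hlamne : lam ≠ 0 := by
      intro h
      rw [h, Matrix.rank_zero] at h1
      simp at h1
    rcases hcases with ⟨t, ht, hut⟩ | hcol
    · have hcoef : ¬(lam 0 0 = 0 ∧ lam 1 0 = 0) := by
        rintro ⟨ha, hc⟩
        exact hlamne (mat_ext p lam ha (by rw [ht 0, ha, mul_zero]) hc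
          (by rw [ht 1, hc, mul_zero]))
      obtain ⟨o₀, ho₀⟩ := exists_rep p (lam 0 0) (lam 1 0) hcoef
      have hfac : ∀ o : Option (ZMod p), Q p u lam (W p o)
          = ((u : ZMod p) + t ^ 2) * (lam 0 0 * W p o 0 + lam 1 0 * W p o 1) ^ 2 := by
        intro o
        rw [Q, ht 0, ht 1]
        ring
      have hQiff : ∀ o, Q p u lam (W p o) = 0 ↔ o = o₀ := by
        intro o
        rw [← ho₀ o, hfac o]
        constructor
        · intro hQ0
          have := (mul_eq_zero.mp hQ0).resolve_left hut
          exact sq_eq_zero_iff.mp this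
        · intro hα
          rw [hα]
          ring
      refine (gauss_eq p u lam).trans ?_
      exact (L_one p _ _ _ o₀ hQiff).trans (by ring)
    · have hcoef : ¬(lam 0 1 = 0 ∧ lam 1 1 = 0) := by
        rintro ⟨hb, hd2⟩
        exact hlamne (mat_ext p lam (hcol 0) hb (hcol 1) hd2)
      obtain ⟨o₀, ho₀⟩ := exists_rep p (lam 0 1) (lam 1 1) hcoef
      have hfac : ∀ o : Option (ZMod p), Q p u lam (W p o)
          = (lam 0 1 * W p o 0 + lam 1 1 * W p o 1) ^ 2 := by
        intro o
        rw [Q, hcol 0, hcol 1]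
        ring
      have hQiff : ∀ o, Q p u lam (W p o) = 0 ↔ o = o₀ := by
        intro o
        rw [← ho₀ o, hfac o]
        constructor
        · intro hQ0
          exact sq_eq_zero_iff.mp hQ0
        · intro hα
          rw [hα]
          ring
      refine (gauss_eq p u lam).trans ?_
      exact (L_one p _ _ _ o₀ hQiff).trans (by ring)
end

section
/- Let M = ᵗX · [[u, r/2],[r/2, 1]] · X with X = [[1,0],[x,1]], r ∈ {0,1}, over ℤ/2ℤ considerations. For λ ∈ ℤ^{2×2}, define G₁(λ) = Σ_{x symmetric 2×2 over ℤ/2ℤ, rank = 1} (−1)^{tr(2M ᵗλ x λ)} (interpreting e(a/2) = (−1)^a). Then in the case r = 0 (M = ᵗX diag(u,1) X): G₁(λ) = 3 if λᵗX ≡ 0 mod 2; G₁(λ) = −1 + 2(1+(−1)^{u+t}) if rank₂(λᵗX) = 1 and λᵗX ≡ (λ', tλ') mod 2; G₁(λ) = −1 if rank₂(λᵗX) = 1 with λᵗX ≡ (0,λ') mod 2, or if rank₂(λᵗX) = 2. -/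
open Matrix

/-- `X = [[1,0],[x,1]]`. -/
def Xmat (x : ℤ) : Matrix (Fin 2) (Fin 2) ℤ := !![1, 0; x, 1]

/-- `M = ᵗX · diag(u,1) · X` (the case `r = 0` of a half-integral binary form). -/
def Mmat (u x : ℤ) : Matrix (Fin 2) (Fin 2) ℤ :=
  (Xmat x)ᵀ * Matrix.diagonal ![u, 1] * Xmat x

/-- The rank-one Gauss sum at `p = 2`:
`G₁(λ) = Σ_{s symmetric rank-1 over ℤ/2ℤ} (−1)^{tr(M ᵗλ s λ)}`, where the three symmetric
rank-one matrices over `ℤ/2ℤ` are lifted to `[[1,0],[0,0]]`, `[[0,0],[0,1]]`,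
`[[1,1],[1,1]]`, and `e(a/2) = (−1)^a`. -/
noncomputable def gaussSumTwo (u x : ℤ) (lam : Matrix (Fin 2) (Fin 2) ℤ) : ℚ :=
  (-1 : ℚ) ^ ((Mmat u x * lamᵀ * !![(1 : ℤ), 0; 0, 0] * lam).trace)
    + (-1 : ℚ) ^ ((Mmat u x * lamᵀ * !![(0 : ℤ), 0; 0, 1] * lam).trace)
    + (-1 : ℚ) ^ ((Mmat u x * lamᵀ * !![(1 : ℤ), 1; 1, 1] * lam).trace)

noncomputable def Efn (z : ZMod 2) : ℚ := if z = 0 then 1 else -1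

@[simp] lemma Efn_zero : Efn 0 = 1 := by simp [Efn]
@[simp] lemma Efn_one : Efn 1 = -1 := by simp [Efn]

lemma neg_one_zpow_cast (n : ℤ) : (-1 : ℚ) ^ n = Efn (n : ZMod 2) := by
  have h2 : ((n : ZMod 2) = 0) ↔ (2:ℤ) ∣ n := by
    rw [ZMod.intCast_zmod_eq_zero_iff_dvd]; norm_num
  rcases Int.even_or_odd n with h | h
  · rw [h.neg_one_zpow, Efn, if_pos (h2.mpr (even_iff_two_dvd.mp h))]
  · rw [h.neg_one_zpow, Efn, if_neg]
    rw [h2, ← even_iff_two_dvd]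
    exact (Int.not_even_iff_odd).mpr h

lemma zmod2_cases : ∀ z : ZMod 2, z = 0 ∨ z = 1 := by decide

lemma dvd_iff_cast (m : ℤ) : (2:ℤ) ∣ m ↔ ((m : ZMod 2) = 0) := by
  rw [ZMod.intCast_zmod_eq_zero_iff_dvd]; norm_num

lemma zmod2_sq : ∀ z : ZMod 2, z ^ 2 = z := by decide

lemma key1 (u p q r s : ℤ) (hp : 2∣p) (hq : 2∣q) (hr : 2∣r) (hs : 2∣s) :
    (-1:ℚ)^(u*p^2+q^2) + (-1:ℚ)^(u*r^2+s^2) + (-1:ℚ)^(u*(p+r)^2+(q+s)^2) = 3 := by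
  rw [dvd_iff_cast] at hp hq hr hs
  simp only [neg_one_zpow_cast]
  push_cast
  simp only [zmod2_sq]
  rw [hp, hq, hr, hs]
  norm_num

lemma key2 (u t p q r s : ℤ) (hq : 2 ∣ q - t*p) (hs : 2 ∣ s - t*r)
    (h : ¬(2∣p ∧ 2∣q ∧ 2∣r ∧ 2∣s)) :
    (-1:ℚ)^(u*p^2+q^2) + (-1:ℚ)^(u*r^2+s^2) + (-1:ℚ)^(u*(p+r)^2+(q+s)^2)
      = -1 + 2 * (1 + (-1:ℚ)^(u+t)) := by
  simp only [dvd_iff_cast] at hq hs h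
  simp only [neg_one_zpow_cast]
  push_cast at hq hs h ⊢
  simp only [zmod2_sq]
  generalize (u : ZMod 2) = U at *
  generalize (t : ZMod 2) = T at *
  generalize (p : ZMod 2) = P at *
  generalize (q : ZMod 2) = Q at *
  generalize (r : ZMod 2) = R at *
  generalize (s : ZMod 2) = S at *
  rcases zmod2_cases U with rfl | rfl <;>
  rcases zmod2_cases T with rfl | rfl <;>
  rcases zmod2_cases P with rfl | rfl <;>
  rcases zmod2_cases Q with rfl | rfl <;>
  rcases zmod2_cases R with rfl | rfl <;>
  rcases zmod2_cases S with rfl | rfl <;>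
  simp_all (config := { decide := true }) [Efn] <;> norm_num

lemma key3 (u p q r s : ℤ) (hp : 2∣p) (hr : 2∣r) (h : ¬(2∣p ∧ 2∣q ∧ 2∣r ∧ 2∣s)) :
    (-1:ℚ)^(u*p^2+q^2) + (-1:ℚ)^(u*r^2+s^2) + (-1:ℚ)^(u*(p+r)^2+(q+s)^2) = -1 := by
  simp only [dvd_iff_cast] at hp hr h
  simp only [neg_one_zpow_cast]
  push_cast at hp hr h ⊢
  simp only [zmod2_sq]
  generalize (u : ZMod 2) = U at *
  generalize (p : ZMod 2) = P at *
  generalize (q : ZMod 2) = Q at *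
  generalize (r : ZMod 2) = R at *
  generalize (s : ZMod 2) = S at *
  rcases zmod2_cases U with rfl | rfl <;>
  rcases zmod2_cases P with rfl | rfl <;>
  rcases zmod2_cases Q with rfl | rfl <;>
  rcases zmod2_cases R with rfl | rfl <;>
  rcases zmod2_cases S with rfl | rfl <;>
  simp_all (config := { decide := true }) [Efn] <;> norm_num

lemma key4 (u p q r s : ℤ) (h : ¬ (2:ℤ) ∣ (p*s - q*r)) :
    (-1:ℚ)^(u*p^2+q^2) + (-1:ℚ)^(u*r^2+s^2) + (-1:ℚ)^(u*(p+r)^2+(q+s)^2) = -1 := by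
  simp only [dvd_iff_cast] at h
  simp only [neg_one_zpow_cast]
  push_cast at h ⊢
  simp only [zmod2_sq]
  generalize (u : ZMod 2) = U at *
  generalize (p : ZMod 2) = P at *
  generalize (q : ZMod 2) = Q at *
  generalize (r : ZMod 2) = R at *
  generalize (s : ZMod 2) = S at *
  rcases zmod2_cases U with rfl | rfl <;>
  rcases zmod2_cases P with rfl | rfl <;>
  rcases zmod2_cases Q with rfl | rfl <;>
  rcases zmod2_cases R with rfl | rfl <;>
  rcases zmod2_cases S with rfl | rfl <;>
  simp_all (config := { decide := true }) [Efn] <;> norm_num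

lemma gauss_eq (u x a b c d : ℤ) :
    gaussSumTwo u x !![a, b; c, d] =
      (-1:ℚ)^(u*a^2+(a*x+b)^2) + (-1:ℚ)^(u*c^2+(c*x+d)^2)
        + (-1:ℚ)^(u*(a+c)^2+((a*x+b)+(c*x+d))^2) := by
  have e1 : (Mmat u x * (!![a,b;c,d])ᵀ * !![(1:ℤ),0;0,0] * !![a,b;c,d]).trace
      = u*a^2+(a*x+b)^2 := by
    simp [Mmat, Xmat, Matrix.trace_fin_two, Matrix.mul_apply, Fin.sum_univ_succ,
      Matrix.diagonal]
    ring
  have e2 : (Mmat u x * (!![a,b;c,d])ᵀ * !![(0:ℤ),0;0,1] * !![a,b;c,d]).trace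
      = u*c^2+(c*x+d)^2 := by
    simp [Mmat, Xmat, Matrix.trace_fin_two, Matrix.mul_apply, Fin.sum_univ_succ,
      Matrix.diagonal]
    ring
  have e3 : (Mmat u x * (!![a,b;c,d])ᵀ * !![(1:ℤ),1;1,1] * !![a,b;c,d]).trace
      = u*(a+c)^2+((a*x+b)+(c*x+d))^2 := by
    simp [Mmat, Xmat, Matrix.trace_fin_two, Matrix.mul_apply, Fin.sum_univ_succ,
      Matrix.diagonal]
    ring
  rw [gaussSumTwo, e1, e2, e3]

/-- Values of the rank-one Gauss sum over `ℤ/2ℤ` for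
`M = ᵗX diag(u,1) X`, in terms of `Y = λ ᵗX` mod 2. -/
theorem statement_10 (u x : ℤ) (lam : Matrix (Fin 2) (Fin 2) ℤ) :
    ((∀ i j, (2 : ℤ) ∣ (lam * (Xmat x)ᵀ) i j) → gaussSumTwo u x lam = 3) ∧
    ((((lam * (Xmat x)ᵀ).map (Int.cast : ℤ → ZMod 2)).rank = 1 →
      ∀ t : ℤ, (∀ i, (2 : ℤ) ∣ ((lam * (Xmat x)ᵀ) i 1 - t * (lam * (Xmat x)ᵀ) i 0)) →
        gaussSumTwo u x lam = -1 + 2 * (1 + (-1 : ℚ) ^ (u + t)))) ∧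
    ((((lam * (Xmat x)ᵀ).map (Int.cast : ℤ → ZMod 2)).rank = 1 →
      (∀ i, (2 : ℤ) ∣ (lam * (Xmat x)ᵀ) i 0) → gaussSumTwo u x lam = -1)) ∧
    ((((lam * (Xmat x)ᵀ).map (Int.cast : ℤ → ZMod 2)).rank = 2 →
      gaussSumTwo u x lam = -1)) := by
  obtain ⟨a, b, c, d, hlam⟩ : ∃ a b c d, lam = !![a, b; c, d] :=
    ⟨_, _, _, _, Matrix.eta_fin_two lam⟩
  subst hlam
  have hT : (Xmat x)ᵀ = !![(1:ℤ), x; 0, 1] := by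
    ext i j
    fin_cases i <;> fin_cases j <;> rfl
  have hY : !![a, b; c, d] * (Xmat x)ᵀ = !![a, a*x+b; c, c*x+d] := by
    rw [hT, Matrix.mul_fin_two]
    norm_num
  have hmap : (!![a, a*x+b; c, c*x+d] : Matrix (Fin 2) (Fin 2) ℤ).map
      (Int.cast : ℤ → ZMod 2)
      = !![(a : ZMod 2), ((a*x+b : ℤ) : ZMod 2); ((c : ℤ) : ZMod 2), ((c*x+d : ℤ) : ZMod 2)] := by
    ext i j
    fin_cases i <;> fin_cases j <;> simp [Matrix.map_apply]
  rw [hY]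
  have hG := gauss_eq u x a b c d
  -- from rank = 1 deduce not all entries even
  have hne : ∀ n : ℕ, (!![a, a*x+b; c, c*x+d].map (Int.cast : ℤ → ZMod 2)).rank = n →
      n ≠ 0 → ¬(2∣a ∧ 2∣(a*x+b) ∧ 2∣c ∧ 2∣(c*x+d)) := by
    intro n hr hn hall
    obtain ⟨h1, h2, h3, h4⟩ := hall
    rw [dvd_iff_cast] at h1 h2 h3 h4
    have hz : (!![a, a*x+b; c, c*x+d].map (Int.cast : ℤ → ZMod 2)) = 0 := by
      rw [hmap]
      ext i j
      fin_cases i <;> fin_cases j <;> simp [h1, h2, h3, h4]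
    rw [hz, Matrix.rank_zero] at hr
    exact hn hr.symm
  refine ⟨?_, ?_, ?_, ?_⟩
  · intro h
    have h00 := h 0 0; have h01 := h 0 1; have h10 := h 1 0; have h11 := h 1 1
    simp [ ] at h00 h01 h10 h11
    rw [hG]
    exact key1 u a (a*x+b) c (c*x+d) h00 h01 h10 h11
  · intro hr t ht
    have h0 := ht 0; have h1 := ht 1
    simp [ ] at h0 h1
    rw [hG]
    exact key2 u t a (a*x+b) c (c*x+d) h0 h1 (hne 1 hr one_ne_zero)
  · intro hr h
    have h0 := h 0; have h1 := h 1
    simp [ ] at h0 h1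
    rw [hG]
    exact key3 u a (a*x+b) c (c*x+d) h0 h1 (hne 1 hr one_ne_zero)
  · intro hr
    rw [hG]
    apply key4
    intro hdvd
    have hd0 : ((!![a, a*x+b; c, c*x+d]).map (Int.cast : ℤ → ZMod 2)).det = 0 := by
      rw [hmap, Matrix.det_fin_two_of]
      have h0 : ((a*(c*x+d) - (a*x+b)*c : ℤ) : ZMod 2) = 0 := (dvd_iff_cast _).mp hdvd
      push_cast at h0 ⊢
      linear_combination h0
    obtain ⟨v, hv0, hv⟩ := (Matrix.exists_mulVec_eq_zero_iff).mpr hd0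
    set A := (!![a, a*x+b; c, c*x+d]).map (Int.cast : ℤ → ZMod 2) with hA
    have hrn := LinearMap.finrank_range_add_finrank_ker A.mulVecLin
    have hker : 0 < Module.finrank (ZMod 2) (LinearMap.ker A.mulVecLin) := by
      rw [Module.finrank_pos_iff]
      refine ⟨⟨⟨v, ?_⟩, 0, ?_⟩⟩
      · rw [LinearMap.mem_ker, Matrix.mulVecLin_apply, hv]
      · simp [Subtype.ext_iff, hv0]
    have hpi : Module.finrank (ZMod 2) (Fin 2 → ZMod 2) = 2 := by
      simp [Module.finrank_pi]
    rw [hpi] at hrn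
    have hrank : A.rank = 2 := hr
    rw [Matrix.rank] at hrank
    omega
end
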